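/- arXiv:1310.8186 — 6 statements merged into one kernel-verified Lean document; each statement's English description precedes it below -/
import Mathlib

section
/- A 2-connected subcubic graph that contains two edge-disjoint odd cycles contains a skewed theta, i.e., two vertices joined by three edge-disjoint paths, two of odd length and one of even length. -/
open SimpleGraph

attribute [local instance] Classical.propDecidable

universe u

variable {V : Type u}

/-- A graph is subcubic if every vertex has degree (number of neighbours) at most 3. -/
def Subcubic (G : SimpleGraph V) : Prop := ∀ v : V, (G.neighborSet v).ncard ≤ 3

/-- Two walks are edge-disjoint if they share no edge. -/
def WalkEdgeDisjoint {G : SimpleGraph V} {a b c d : V}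
    (p : G.Walk a b) (q : G.Walk c d) : Prop :=
  ∀ e, e ∈ p.edges → e ∉ q.edges

/-- A skewed theta: two branch vertices joined by three pairwise edge-disjoint paths,
two of odd length and one of even length. -/
def HasSkewedTheta (G : SimpleGraph V) : Prop :=
  ∃ (a b : V) (p₁ p₂ p₃ : G.Walk a b),
    p₁.IsPath ∧ p₂.IsPath ∧ p₃.IsPath ∧
    WalkEdgeDisjoint p₁ p₂ ∧ WalkEdgeDisjoint p₁ p₃ ∧ WalkEdgeDisjoint p₂ p₃ ∧
    Odd p₁.length ∧ Odd p₂.length ∧ Even p₃.length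

/-- A graph is 2-connected: at least 3 vertices and deleting any vertex leaves it connected. -/
def TwoConnected (G : SimpleGraph V) : Prop :=
  3 ≤ Nat.card V ∧ ∀ v : V, ((⊤ : G.Subgraph).deleteVerts {v}).coe.Connected

/-- Given a bipartition with first class `A`, an edge is `P`-odd if both of its
endvertices lie in the same class. -/
def POdd (A : Set V) (e : Sym2 V) : Prop :=
  (∀ x ∈ e, x ∈ A) ∨ (∀ x ∈ e, x ∉ A)

/-- A stable (independent) set of vertices. -/
def StableSet (G : SimpleGraph V) (s : Set V) : Prop :=
  s.Pairwise fun a b => ¬ G.Adj a b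

/-- `u` is the centre of an induced claw. -/
def HasInducedClawAt (G : SimpleGraph V) (u : V) : Prop :=
  ∃ a b c : V, G.Adj u a ∧ G.Adj u b ∧ G.Adj u c ∧
    a ≠ b ∧ a ≠ c ∧ b ≠ c ∧ ¬ G.Adj a b ∧ ¬ G.Adj a c ∧ ¬ G.Adj b c

/-- A graph is claw-free if it has no induced claw. -/
def ClawFree (G : SimpleGraph V) : Prop := ∀ u : V, ¬ HasInducedClawAt G u

/-- The t-contraction of `G` at a vertex `v`: the neighbours of `v` are removed,
and `v` becomes adjacent to all former second neighbours. -/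
def tContract (G : SimpleGraph V) (v : V) :
    SimpleGraph {w : V // w ∉ G.neighborSet v} :=
  SimpleGraph.fromRel (fun a b =>
    G.Adj a b ∨ ((a : V) = v ∧ ∃ n : V, G.Adj v n ∧ G.Adj n (b : V)))

/-- One step in the formation of a t-minor: delete a vertex, or perform a
t-contraction at a vertex whose neighbourhood is stable. -/
def TStep {W W' : Type u} (G : SimpleGraph W) (H : SimpleGraph W') : Prop :=
  (∃ v : W, Nonempty (H ≃g (G.induce {w : W | w ≠ v}))) ∨
  (∃ v : W, StableSet G (G.neighborSet v) ∧ Nonempty (H ≃g tContract G v))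

/-- `H` is a t-minor of `G` if it is obtained by a series of vertex deletions
and t-contractions. -/
def IsTMinor {W W' : Type u} (G : SimpleGraph W) (H : SimpleGraph W') : Prop :=
  Relation.ReflTransGen (fun a b : (Σ U : Type u, SimpleGraph U) => TStep a.2 b.2)
    ⟨W, G⟩ ⟨W', H⟩

/-- The stable set polytope of `G`: the convex hull of characteristic vectors of stable sets. -/
noncomputable def stableSetPolytope (G : SimpleGraph V) : Set (V → ℝ) :=
  convexHull ℝ {x : V → ℝ | ∃ s : Set V, StableSet G s ∧ x = s.indicator 1}

/-- The polytope given by non-negativity, edge and odd-cycle inequalities. -/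
def TSTAB (G : SimpleGraph V) [Fintype V] : Set (V → ℝ) :=
  {x : V → ℝ |
    (∀ v : V, 0 ≤ x v ∧ x v ≤ 1) ∧
    (∀ u v : V, G.Adj u v → x u + x v ≤ 1) ∧
    (∀ (v : V) (c : G.Walk v v), c.IsCycle → Odd c.length →
      ∑ u ∈ c.support.toFinset, x u ≤ ((c.length / 2 : ℕ) : ℝ))}

/-- A graph is t-perfect if its stable set polytope coincides with `TSTAB`. -/
def TPerfect (G : SimpleGraph V) [Fintype V] : Prop :=
  stableSetPolytope G = TSTAB G

/-- The complete graph on four vertices. -/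
def K4 : SimpleGraph (Fin 4) := ⊤

/-- The 5-wheel: a 5-cycle (on `0,…,4`) plus a hub (`5`) adjacent to all cycle vertices. -/
def W5 : SimpleGraph (Fin 6) :=
  SimpleGraph.fromRel (fun i j =>
    (j : ℕ) = 5 ∨ ((i : ℕ) < 5 ∧ (j : ℕ) < 5 ∧ (j : ℕ) = ((i : ℕ) + 1) % 5))

/-- The 5-cycle. -/
def C5 : SimpleGraph (Fin 5) :=
  SimpleGraph.fromRel (fun i j => (j : ℕ) = ((i : ℕ) + 1) % 5)

/-- An induced path of `G` all of whose vertices lie in `S`. -/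
def IsInducedPathIn (G : SimpleGraph V) (S : Set V) {a b : V} (p : G.Walk a b) : Prop :=
  p.IsPath ∧ (∀ x ∈ p.support, x ∈ S) ∧
    ∀ x y : V, x ∈ p.support → y ∈ p.support → G.Adj x y → s(x, y) ∈ p.edges

/-- The data of a skewed prism: two triangles `x₁x₂x₃`, `y₁y₂y₃` joined by three
vertex-disjoint induced paths `P₁,P₂,P₃`, where `P₁,P₂` are even and `P₃` is odd, and
the triangle edges are the only edges between the paths. -/
def IsSkewedPrism (G : SimpleGraph V) (x₁ x₂ x₃ y₁ y₂ y₃ : V)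
    (P₁ : G.Walk x₁ y₁) (P₂ : G.Walk x₂ y₂) (P₃ : G.Walk x₃ y₃) : Prop :=
  P₁.IsPath ∧ P₂.IsPath ∧ P₃.IsPath ∧
  Even P₁.length ∧ Even P₂.length ∧ Odd P₃.length ∧
  P₁.support.Disjoint P₂.support ∧ P₁.support.Disjoint P₃.support ∧
  P₂.support.Disjoint P₃.support ∧
  G.Adj x₁ x₂ ∧ G.Adj x₁ x₃ ∧ G.Adj x₂ x₃ ∧
  G.Adj y₁ y₂ ∧ G.Adj y₁ y₃ ∧ G.Adj y₂ y₃ ∧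
  (∀ u w : V, u ∈ P₁.support ++ P₂.support ++ P₃.support →
    w ∈ P₁.support ++ P₂.support ++ P₃.support →
    (G.Adj u w ↔ (s(u, w) ∈ P₁.edges ∨ s(u, w) ∈ P₂.edges ∨ s(u, w) ∈ P₃.edges ∨
      s(u, w) ∈ [s(x₁, x₂), s(x₁, x₃), s(x₂, x₃), s(y₁, y₂), s(y₁, y₃), s(y₂, y₃)])))

/-- `G` contains a skewed prism as an induced subgraph. -/
def HasSkewedPrism (G : SimpleGraph V) : Prop :=
  ∃ (x₁ x₂ x₃ y₁ y₂ y₃ : V) (P₁ : G.Walk x₁ y₁) (P₂ : G.Walk x₂ y₂) (P₃ : G.Walk x₃ y₃),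
    IsSkewedPrism G x₁ x₂ x₃ y₁ y₂ y₃ P₁ P₂ P₃

/-- A `u`–`v`-linked obstruction with all vertices inside `S`: four vertex-disjoint
induced paths `R = u…r`, `S' = v…s`, `X = x₁…x₂`, `Y = y₁…y₂` with triangles
`r,x₁,y₁` and `s,x₂,y₂`, the triangle edges being the only edges between the paths,
and `X` of even length. -/
def IsLinkedObstructionIn (G : SimpleGraph V) (S : Set V) (u v : V) : Prop :=
  ∃ (r s x₁ x₂ y₁ y₂ : V) (R : G.Walk u r) (S' : G.Walk v s)
    (X : G.Walk x₁ x₂) (Y : G.Walk y₁ y₂),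
    R.IsPath ∧ S'.IsPath ∧ X.IsPath ∧ Y.IsPath ∧ Even X.length ∧
    (∀ w ∈ R.support, w ∈ S) ∧ (∀ w ∈ S'.support, w ∈ S) ∧
    (∀ w ∈ X.support, w ∈ S) ∧ (∀ w ∈ Y.support, w ∈ S) ∧
    R.support.Disjoint S'.support ∧ R.support.Disjoint X.support ∧
    R.support.Disjoint Y.support ∧ S'.support.Disjoint X.support ∧
    S'.support.Disjoint Y.support ∧ X.support.Disjoint Y.support ∧
    G.Adj r x₁ ∧ G.Adj r y₁ ∧ G.Adj x₁ y₁ ∧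
    G.Adj s x₂ ∧ G.Adj s y₂ ∧ G.Adj x₂ y₂ ∧
    (∀ a b : V, a ∈ R.support ++ S'.support ++ X.support ++ Y.support →
      b ∈ R.support ++ S'.support ++ X.support ++ Y.support →
      (G.Adj a b ↔ (s(a, b) ∈ R.edges ∨ s(a, b) ∈ S'.edges ∨ s(a, b) ∈ X.edges ∨
        s(a, b) ∈ Y.edges ∨
        s(a, b) ∈ [s(r, x₁), s(r, y₁), s(x₁, y₁), s(s, x₂), s(s, y₂), s(x₂, y₂)])))

section Helpers

open SimpleGraph Walk

variable {G : SimpleGraph V}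

lemma mem_tail_support_end {x y : V} (w : G.Walk x y) (hw : ¬ w.Nil) :
    y ∈ w.support.tail := by
  cases w with
  | nil => simp at hw
  | cons h p => simpa using p.end_mem_support

lemma append_isPath {a b c : V} {p : G.Walk a b} {q : G.Walk b c}
    (hp : p.IsPath) (hq : q.IsPath)
    (hshare : ∀ x, x ∈ p.support → x ∈ q.support → x = b) :
    (p.append q).IsPath := by
  apply Walk.IsPath.mk'
  rw [Walk.support_append]
  have hqt : q.support.tail.Nodup := by
    have := hq.support_nodup
    rw [Walk.support_eq_cons q] at this
    exact (List.nodup_cons.mp this).2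
  refine List.Nodup.append hp.support_nodup hqt ?_
  intro x hxp hxt
  have hxq : x ∈ q.support := by
    rw [Walk.support_eq_cons q]
    exact List.mem_cons_of_mem _ hxt
  have hb := hshare x hxp hxq
  subst hb
  have := hq.support_nodup
  rw [Walk.support_eq_cons q] at this
  exact (List.nodup_cons.mp this).1 hxt

lemma exists_trunc (S : Set V) {a c : V} (w : G.Walk a c) (hc : c ∈ S) :
    ∃ b ∈ S, ∃ p : G.Walk a b, p.IsPath ∧ (∀ x ∈ p.support, x ∈ w.support) ∧
      ∀ x ∈ p.support, x ∈ S → x = b := by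
  induction w with
  | nil =>
    refine ⟨_, hc, Walk.nil, IsPath.nil, by simp, ?_⟩
    intro x hx _
    simpa using hx
  | @cons u d c' hadj w' ih =>
    by_cases hu : u ∈ S
    · refine ⟨u, hu, Walk.nil, IsPath.nil, by simp, ?_⟩
      intro x hx _
      simpa using hx
    · obtain ⟨b, hbS, p', _, hsub, hmeet⟩ := ih hc
      refine ⟨b, hbS, (Walk.cons hadj p').bypass, Walk.bypass_isPath _, ?_, ?_⟩
      · intro x hx
        have hx' := Walk.support_bypass_subset _ hx
        simp only [Walk.support_cons, List.mem_cons] at hx' ⊢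
        exact hx'.imp id (hsub x)
      · intro x hx hxS
        have hx' := Walk.support_bypass_subset _ hx
        simp only [Walk.support_cons, List.mem_cons] at hx'
        rcases hx' with rfl | hx'
        · exact absurd hxS hu
        · exact hmeet x hx' hxS

lemma coe_walk_exists {H : G.Subgraph} : ∀ {x y : H.verts} (_ : H.coe.Walk x y),
    ∃ w' : G.Walk x y, ∀ z ∈ w'.support, z ∈ H.verts := by
  intro x y w
  induction w with
  | nil =>
    refine ⟨Walk.nil, ?_⟩
    intro z hz
    simp only [Walk.support_nil, List.mem_singleton] at hz
    subst hz
    exact Subtype.coe_prop _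
  | @cons u v' w'' h p ih =>
    obtain ⟨w', hw'⟩ := ih
    refine ⟨Walk.cons (H.coe_adj_sub _ _ h) w', ?_⟩
    intro z hz
    rw [Walk.support_cons, List.mem_cons] at hz
    rcases hz with rfl | hz
    · exact u.2
    · exact hw' z hz

lemma walk_avoiding (hconn : ∀ v : V, ((⊤ : G.Subgraph).deleteVerts {v}).coe.Connected)
    {v x y : V} (hx : x ≠ v) (hy : y ≠ v) :
    ∃ w : G.Walk x y, v ∉ w.support := by
  have hxm : x ∈ ((⊤ : G.Subgraph).deleteVerts {v}).verts := by
    simp [Subgraph.deleteVerts_verts, hx]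
  have hym : y ∈ ((⊤ : G.Subgraph).deleteVerts {v}).verts := by
    simp [Subgraph.deleteVerts_verts, hy]
  obtain ⟨w⟩ := (hconn v).preconnected ⟨x, hxm⟩ ⟨y, hym⟩
  obtain ⟨w', hw'⟩ := coe_walk_exists w
  refine ⟨w', fun hv => ?_⟩
  have := hw' v hv
  simp [Subgraph.deleteVerts_verts] at this

lemma cycle_nbrs {v : V} {c : G.Walk v v} (hc : c.IsCycle) :
    ∃ x y, x ≠ y ∧ s(v, x) ∈ c.edges ∧ s(v, y) ∈ c.edges := by
  obtain ⟨x, hadj, p, rfl⟩ := Walk.not_nil_iff.mp hc.not_nil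
  have hxv : x ≠ v := hadj.ne'
  obtain ⟨y, hadj2, p2, hpr⟩ := Walk.not_nil_iff.mp
    (Walk.not_nil_of_ne (Ne.symm hxv) : ¬ p.reverse.Nil)
  have hy : s(v, y) ∈ p.edges := by
    have h1 : s(v, y) ∈ p.reverse.edges := by rw [hpr]; simp
    rwa [Walk.edges_reverse, List.mem_reverse] at h1
  have hnodup := hc.edges_nodup
  rw [Walk.edges_cons] at hnodup
  have hne : x ≠ y := by
    rintro rfl
    exact (List.nodup_cons.mp hnodup).1 hy
  exact ⟨x, y, hne, by simp, List.mem_cons_of_mem _ hy⟩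

lemma four_neighbors_false [Fintype V] (h3 : Subcubic G) {v x1 x2 x3 x4 : V}
    (a1 : G.Adj v x1) (a2 : G.Adj v x2) (a3 : G.Adj v x3) (a4 : G.Adj v x4)
    (d12 : x1 ≠ x2) (d13 : x1 ≠ x3) (d14 : x1 ≠ x4)
    (d23 : x2 ≠ x3) (d24 : x2 ≠ x4) (d34 : x3 ≠ x4) : False := by
  have hsub : ({x1, x2, x3, x4} : Set V) ⊆ G.neighborSet v := by
    intro z hz
    simp only [Set.mem_insert_iff, Set.mem_singleton_iff] at hz
    rcases hz with rfl | rfl | rfl | rfl <;> assumption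
  have hcard : ({x1, x2, x3, x4} : Set V).ncard = 4 := by
    rw [Set.ncard_insert_of_notMem (by simp [d12, d13, d14]) (Set.toFinite _),
        Set.ncard_insert_of_notMem (by simp [d23, d24]) (Set.toFinite _),
        Set.ncard_insert_of_notMem (by simp [d34]) (Set.toFinite _),
        Set.ncard_singleton]
  have hle := Set.ncard_le_ncard hsub (Set.toFinite _)
  have h3v := h3 v
  omega

lemma cycles_vertex_disjoint [Fintype V] (h3 : Subcubic G) {a b : V}
    {c₁ : G.Walk a a} {c₂ : G.Walk b b} (hc₁ : c₁.IsCycle) (hc₂ : c₂.IsCycle)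
    (hdisj : WalkEdgeDisjoint c₁ c₂) {v : V}
    (hv1 : v ∈ c₁.support) (hv2 : v ∈ c₂.support) : False := by
  obtain ⟨x1, y1, hxy1, he1, he2⟩ := cycle_nbrs (hc₁.rotate hv1)
  obtain ⟨x2, y2, hxy2, he3, he4⟩ := cycle_nbrs (hc₂.rotate hv2)
  have m1 : s(v, x1) ∈ c₁.edges := (Walk.rotate_edges c₁ v hv1).mem_iff.mp he1
  have m2 : s(v, y1) ∈ c₁.edges := (Walk.rotate_edges c₁ v hv1).mem_iff.mp he2
  have m3 : s(v, x2) ∈ c₂.edges := (Walk.rotate_edges c₂ v hv2).mem_iff.mp he3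
  have m4 : s(v, y2) ∈ c₂.edges := (Walk.rotate_edges c₂ v hv2).mem_iff.mp he4
  have d13 : x1 ≠ x2 := by rintro rfl; exact hdisj _ m1 m3
  have d14 : x1 ≠ y2 := by rintro rfl; exact hdisj _ m1 m4
  have d23 : y1 ≠ x2 := by rintro rfl; exact hdisj _ m2 m3
  have d24 : y1 ≠ y2 := by rintro rfl; exact hdisj _ m2 m4
  exact four_neighbors_false h3 (Walk.adj_of_mem_edges c₁ m1) (Walk.adj_of_mem_edges c₁ m2)
    (Walk.adj_of_mem_edges c₂ m3) (Walk.adj_of_mem_edges c₂ m4) hxy1 d13 d14 d23 d24 hxy2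

lemma length_rotate' {a u : V} (c : G.Walk a a) (hu : u ∈ c.support) :
    (c.rotate u hu).length = c.length := by
  have hspec := congrArg Walk.length (Walk.take_spec c hu)
  rw [Walk.length_append] at hspec
  simp only [Walk.rotate, Walk.length_append]
  omega

lemma rotate_support_mem {a u : V} {c : G.Walk a a} (hn : ¬ c.Nil) (hu : u ∈ c.support) :
    ∀ x, x ∈ (c.rotate u hu).support ↔ x ∈ c.support := by
  intro x
  have h1 : a ∈ c.support.tail := mem_tail_support_end c hn
  have hd : ¬ (c.rotate u hu).Nil := by
    have hl := length_rotate' c hu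
    rw [Walk.nil_iff_length_eq] at hn ⊢
    omega
  have h2 : u ∈ (c.rotate u hu).support.tail := mem_tail_support_end _ hd
  have hr := Walk.support_rotate c u hu
  constructor
  · intro hx
    rw [Walk.support_eq_cons (c.rotate u hu), List.mem_cons] at hx
    rcases hx with rfl | hx
    · exact hu
    · have hx' : x ∈ c.support.tail := hr.mem_iff.mp hx
      rw [Walk.support_eq_cons c]
      exact List.mem_cons_of_mem _ hx'
  · intro hx
    rw [Walk.support_eq_cons c, List.mem_cons] at hx
    have hx' : x ∈ c.support.tail := by
      rcases hx with rfl | hx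
      exacts [h1, hx]
    have hx'' : x ∈ (c.rotate u hu).support.tail := hr.mem_iff.mpr hx'
    rw [Walk.support_eq_cons (c.rotate u hu)]
    exact List.mem_cons_of_mem _ hx''

lemma cycle_split {a : V} {c : G.Walk a a} (hc : c.IsCycle)
    {u v : V} (hu : u ∈ c.support) (hv : v ∈ c.support) (huv : u ≠ v) :
    ∃ (P Q : G.Walk u v), P.IsPath ∧ Q.IsPath ∧
      P.length + Q.length = c.length ∧
      (∀ x ∈ P.support, x ∈ c.support) ∧ (∀ x ∈ Q.support, x ∈ c.support) ∧
      (∀ e ∈ P.edges, e ∈ c.edges) ∧ (∀ e ∈ Q.edges, e ∈ c.edges) ∧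
      (∀ e ∈ P.edges, e ∉ Q.edges) := by
  classical
  have hdc : (c.rotate u hu).IsCycle := hc.rotate hu
  have hmem : ∀ x, x ∈ (c.rotate u hu).support ↔ x ∈ c.support :=
    rotate_support_mem hc.not_nil hu
  have hemem : ∀ e, e ∈ (c.rotate u hu).edges ↔ e ∈ c.edges :=
    fun e => (Walk.rotate_edges c u hu).mem_iff
  set d := c.rotate u hu with hdd
  have hv' : v ∈ d.support := (hmem v).mpr hv
  have hspec : (d.takeUntil v hv').append (d.dropUntil v hv') = d := Walk.take_spec d hv'
  set P := d.takeUntil v hv' with hPd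
  set Q' := d.dropUntil v hv' with hQd
  have hsupp : P.support ++ Q'.support.tail = d.support := by
    have := congrArg Walk.support hspec
    rwa [Walk.support_append] at this
  have hPne : ¬ P.Nil := Walk.not_nil_of_ne huv
  have hQne : ¬ Q'.Nil := Walk.not_nil_of_ne (Ne.symm huv)
  have hsplit : d.support.tail = P.support.tail ++ Q'.support.tail := by
    have h1 := hsupp
    rw [Walk.support_eq_cons P] at h1
    rw [Walk.support_eq_cons d] at h1
    simp only [List.cons_append, List.cons.injEq] at h1
    exact h1.2.symm
  have hnd : d.support.tail.Nodup := hdc.support_nodup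
  rw [hsplit, List.nodup_append] at hnd
  obtain ⟨hnP, hnQ, hdisjPQ⟩ := hnd
  have huQ : u ∈ Q'.support.tail := mem_tail_support_end Q' hQne
  have hvP : v ∈ P.support.tail := mem_tail_support_end P hPne
  have hPpath : P.IsPath := by
    apply Walk.IsPath.mk'
    rw [Walk.support_eq_cons P]
    exact List.nodup_cons.mpr ⟨fun h => hdisjPQ _ h _ huQ rfl, hnP⟩
  have hQpath : Q'.IsPath := by
    apply Walk.IsPath.mk'
    rw [Walk.support_eq_cons Q']
    exact List.nodup_cons.mpr ⟨fun h => hdisjPQ _ hvP _ h rfl, hnQ⟩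
  have hlen : P.length + Q'.length = c.length := by
    have h1 := congrArg Walk.length hspec
    rw [Walk.length_append] at h1
    rw [h1]
    exact length_rotate' c hu
  have hedge : P.edges ++ Q'.edges = d.edges := by
    have := congrArg Walk.edges hspec
    rwa [Walk.edges_append] at this
  have hend : d.edges.Nodup := hdc.edges_nodup
  rw [← hedge, List.nodup_append] at hend
  refine ⟨P, Q'.reverse, hPpath, hQpath.reverse, by rw [Walk.length_reverse]; exact hlen,
    ?_, ?_, ?_, ?_, ?_⟩
  · intro x hx
    exact (hmem x).mp (Walk.support_takeUntil_subset d hv' hx)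
  · intro x hx
    rw [Walk.support_reverse, List.mem_reverse] at hx
    exact (hmem x).mp (Walk.support_dropUntil_subset d hv' hx)
  · intro e he
    exact (hemem e).mp (Walk.edges_takeUntil_subset d hv' he)
  · intro e he
    rw [Walk.edges_reverse, List.mem_reverse] at he
    exact (hemem e).mp (Walk.edges_dropUntil_subset d hv' he)
  · intro e he1 he2
    rw [Walk.edges_reverse, List.mem_reverse] at he2
    exact hend.2.2 e he1 e he2 rfl

lemma start_not_mem_dropUntil_support {s t x : V} {p : G.Walk s t} (hp : p.IsPath)
    (hx : x ∈ p.support) (hxs : x ≠ s) : s ∉ (p.dropUntil x hx).support := by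
  intro hmem
  have hspec := Walk.take_spec p hx
  have hsup : (p.takeUntil x hx).support ++ (p.dropUntil x hx).support.tail = p.support := by
    have := congrArg Walk.support hspec
    rwa [Walk.support_append] at this
  have hnd := hp.support_nodup
  rw [← hsup, List.nodup_append] at hnd
  have hs1 : s ∈ (p.takeUntil x hx).support := Walk.start_mem_support _
  rw [Walk.support_eq_cons (p.dropUntil x hx), List.mem_cons] at hmem
  rcases hmem with heq | hmem
  · exact hxs heq.symm
  · exact hnd.2.2 s hs1 s hmem rfl

lemma edges_disjoint_of_single_meet {s t z : V} {p : G.Walk s t} {c : G.Walk z z}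
    (m : V) (h : ∀ x ∈ p.support, x ∈ c.support → x = m) :
    ∀ e ∈ p.edges, e ∉ c.edges := by
  intro e
  induction e using Sym2.ind with
  | _ x y =>
    intro hep hec
    have hx1 := Walk.fst_mem_support_of_mem_edges p hep
    have hy1 := Walk.snd_mem_support_of_mem_edges p hep
    have hx2 := Walk.fst_mem_support_of_mem_edges c hec
    have hy2 := Walk.snd_mem_support_of_mem_edges c hec
    have ex := h x hx1 hx2
    have ey := h y hy1 hy2
    exact (Walk.adj_of_mem_edges p hep).ne (ex.trans ey.symm)

def IsFan (G : SimpleGraph V) (B : Set V) (a : V) : Prop :=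
  ∃ (b₁ b₂ : V) (P : G.Walk a b₁) (Q : G.Walk a b₂),
    b₁ ∈ B ∧ b₂ ∈ B ∧ b₁ ≠ b₂ ∧ P.IsPath ∧ Q.IsPath ∧
    (∀ x ∈ P.support, x ∈ B → x = b₁) ∧ (∀ x ∈ Q.support, x ∈ B → x = b₂) ∧
    (∀ x, x ∈ P.support → x ∈ Q.support → x = a)

lemma fan_shift {B : Set V} {v a b₁ b₂ : V} (hadj : G.Adj a v)
    {P : G.Walk v b₁} {Q : G.Walk v b₂}
    (hb₁ : b₁ ∈ B) (hb₂ : b₂ ∈ B) (hbb : b₁ ≠ b₂)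
    (hPp : P.IsPath) (hQp : Q.IsPath)
    (hPB : ∀ x ∈ P.support, x ∈ B → x = b₁) (hQB : ∀ x ∈ Q.support, x ∈ B → x = b₂)
    (hPQ : ∀ x, x ∈ P.support → x ∈ Q.support → x = v)
    (haB : a ∉ B) (haP : a ∈ P.support) : IsFan G B a := by
  have hav : a ≠ v := hadj.ne
  have haQ : a ∉ Q.support := fun h => hav (hPQ a haP h)
  refine ⟨b₁, b₂, P.dropUntil a haP, Walk.cons hadj Q, hb₁, hb₂, hbb,
    hPp.dropUntil haP, ?_, ?_, ?_, ?_⟩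
  · rw [Walk.cons_isPath_iff]; exact ⟨hQp, haQ⟩
  · intro x hx hxB
    exact hPB x (Walk.support_dropUntil_subset P haP hx) hxB
  · intro x hx hxB
    rw [Walk.support_cons, List.mem_cons] at hx
    rcases hx with rfl | hx
    · exact absurd hxB haB
    · exact hQB x hx hxB
  · intro x hx1 hx2
    rw [Walk.support_cons, List.mem_cons] at hx2
    rcases hx2 with rfl | hx2
    · rfl
    · have hxv := hPQ x (Walk.support_dropUntil_subset P haP hx1) hx2
      subst hxv
      exact absurd hx1 (start_not_mem_dropUntil_support hPp haP hav)

lemma fan_extend {B : Set V} {v a b₁ d : V} (hadj : G.Adj a v)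
    {P : G.Walk v b₁} {R : G.Walk a d}
    (hb₁ : b₁ ∈ B)
    (hPp : P.IsPath)
    (hPB : ∀ x ∈ P.support, x ∈ B → x = b₁)
    (haB : a ∉ B) (haP : a ∉ P.support)
    (hdB : d ∈ B) (hdb : d ≠ b₁)
    (hRp : R.IsPath)
    (hRD : ∀ x ∈ R.support, (x ∈ P.support ∨ x ∈ B) → x = d) :
    IsFan G B a := by
  refine ⟨b₁, d, Walk.cons hadj P, R, hb₁, hdB, hdb.symm, ?_, hRp, ?_, ?_, ?_⟩
  · rw [Walk.cons_isPath_iff]; exact ⟨hPp, haP⟩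
  · intro x hx hxB
    rw [Walk.support_cons, List.mem_cons] at hx
    rcases hx with rfl | hx
    · exact absurd hxB haB
    · exact hPB x hx hxB
  · intro x hx hxB
    exact hRD x hx (Or.inr hxB)
  · intro x hx1 hx2
    rw [Walk.support_cons, List.mem_cons] at hx1
    rcases hx1 with rfl | hx1
    · rfl
    · exfalso
      have hxd := hRD x hx2 (Or.inl hx1)
      rw [hxd] at hx1
      exact hdb (hPB d hx1 hdB)

lemma fan_reroute {B : Set V} {v a b₁ b₂ d : V} (hadj : G.Adj a v)
    {P : G.Walk v b₁} {Q : G.Walk v b₂} {R : G.Walk a d}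
    (hb₁ : b₁ ∈ B) (hb₂ : b₂ ∈ B) (hbb : b₁ ≠ b₂)
    (hPp : P.IsPath) (hQp : Q.IsPath)
    (hPB : ∀ x ∈ P.support, x ∈ B → x = b₁) (hQB : ∀ x ∈ Q.support, x ∈ B → x = b₂)
    (hPQ : ∀ x, x ∈ P.support → x ∈ Q.support → x = v)
    (haB : a ∉ B) (haQ : a ∉ Q.support)
    (hdP : d ∈ P.support) (hdB : d ∉ B) (hdv : d ≠ v)
    (hRp : R.IsPath) (hvR : v ∉ R.support)
    (hRD : ∀ x ∈ R.support, (x ∈ P.support ∨ x ∈ Q.support ∨ x ∈ B) → x = d) :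
    IsFan G B a := by
  refine ⟨b₁, b₂, R.append (P.dropUntil d hdP), Walk.cons hadj Q, hb₁, hb₂, hbb,
    ?_, ?_, ?_, ?_, ?_⟩
  · apply append_isPath hRp (hPp.dropUntil hdP)
    intro x hxR hxD
    exact hRD x hxR (Or.inl (Walk.support_dropUntil_subset P hdP hxD))
  · rw [Walk.cons_isPath_iff]; exact ⟨hQp, haQ⟩
  · intro x hx hxB
    rw [Walk.mem_support_append_iff] at hx
    rcases hx with hx | hx
    · have hxd := hRD x hx (Or.inr (Or.inr hxB))
      rw [hxd] at hxB
      exact absurd hxB hdB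
    · exact hPB x (Walk.support_dropUntil_subset P hdP hx) hxB
  · intro x hx hxB
    rw [Walk.support_cons, List.mem_cons] at hx
    rcases hx with rfl | hx
    · exact absurd hxB haB
    · exact hQB x hx hxB
  · intro x hx1 hx2
    rw [Walk.support_cons, List.mem_cons] at hx2
    rcases hx2 with rfl | hx2
    · rfl
    · exfalso
      rw [Walk.mem_support_append_iff] at hx1
      rcases hx1 with hx1 | hx1
      · have hxd := hRD x hx1 (Or.inr (Or.inl hx2))
        rw [hxd] at hx2
        exact hdv (hPQ d hdP hx2)
      · have hxv := hPQ x (Walk.support_dropUntil_subset P hdP hx1) hx2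
        subst hxv
        exact start_not_mem_dropUntil_support hPp hdP hdv hx1

lemma fan_lemma (hconn : ∀ v : V, ((⊤ : G.Subgraph).deleteVerts {v}).coe.Connected)
    {B : Set V} {β₁ β₂ : V} (hβ₁ : β₁ ∈ B) (hβ₂ : β₂ ∈ B) (hββ : β₁ ≠ β₂) :
    ∀ n (a : V), a ∉ B → (∃ c ∈ B, ∃ w : G.Walk a c, w.length ≤ n) → IsFan G B a := by
  intro n
  induction n with
  | zero =>
    rintro a haB ⟨c, hcB, w, hw⟩
    have h0 : w.length = 0 := Nat.le_zero.mp hw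
    have : a = c := Walk.eq_of_length_eq_zero h0
    exact absurd (this ▸ hcB) haB
  | succ n ih =>
    rintro a haB ⟨c, hcB, w, hw⟩
    have hneq : a ≠ c := fun h => haB (h ▸ hcB)
    obtain ⟨v, hadj, w', rfl⟩ := Walk.not_nil_iff.mp (Walk.not_nil_of_ne hneq : ¬ w.Nil)
    have hav : a ≠ v := hadj.ne
    rw [Walk.length_cons] at hw
    by_cases hvB : v ∈ B
    · obtain ⟨b', hb'B, hb'v⟩ : ∃ b' ∈ B, b' ≠ v := by
        by_cases h : β₁ = v
        · exact ⟨β₂, hβ₂, fun hh => hββ (h.trans hh.symm)⟩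
        · exact ⟨β₁, hβ₁, h⟩
      obtain ⟨R0, hR0⟩ := walk_avoiding hconn hav hb'v
      obtain ⟨b'', hb''B, R, hRp, hRsub, hRB⟩ := exists_trunc B R0 hb'B
      have hvR : v ∉ R.support := fun h => hR0 (hRsub v h)
      have hb''v : v ≠ b'' := fun h => hvR (h ▸ R.end_mem_support)
      refine ⟨v, b'', Walk.cons hadj Walk.nil, R, hvB, hb''B, hb''v, ?_, hRp, ?_, hRB, ?_⟩
      · rw [Walk.cons_isPath_iff]
        exact ⟨IsPath.nil, by simpa using hav⟩
      · intro x hx hxB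
        simp only [Walk.support_cons, Walk.support_nil, List.mem_cons,
          List.mem_singleton] at hx
        rcases hx with rfl | rfl | h
        · exact absurd hxB haB
        · rfl
        · exact absurd h List.not_mem_nil
      · intro x hx1 hx2
        simp only [Walk.support_cons, Walk.support_nil, List.mem_cons,
          List.mem_singleton] at hx1
        rcases hx1 with rfl | rfl | h
        · rfl
        · exact absurd hx2 hvR
        · exact absurd h List.not_mem_nil
    · have hfan := ih v hvB ⟨c, hcB, w', by omega⟩
      obtain ⟨b₁, b₂, P, Q, hb₁, hb₂, hbb, hPp, hQp, hPB, hQB, hPQ⟩ := hfan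
      by_cases haP : a ∈ P.support
      · exact fan_shift hadj hb₁ hb₂ hbb hPp hQp hPB hQB hPQ haB haP
      by_cases haQ : a ∈ Q.support
      · exact fan_shift hadj hb₂ hb₁ hbb.symm hQp hPp hQB hPB
          (fun x h1 h2 => hPQ x h2 h1) haB haQ
      · have hb₁v : b₁ ≠ v := fun h => hvB (h ▸ hb₁)
        obtain ⟨R0, hR0⟩ := walk_avoiding hconn hav hb₁v
        obtain ⟨dd, hdD, R, hRp, hRsub, hRD'⟩ := exists_trunc
          {x | x ∈ P.support ∨ x ∈ Q.support ∨ x ∈ B} R0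
          (Or.inr (Or.inr hb₁))
        have hRD : ∀ x ∈ R.support, (x ∈ P.support ∨ x ∈ Q.support ∨ x ∈ B) → x = dd :=
          fun x hx h => hRD' x hx h
        have hvR : v ∉ R.support := fun h => hR0 (hRsub v h)
        by_cases hdB : dd ∈ B
        · by_cases hdb₁ : dd = b₁
          · have hdb₂ : dd ≠ b₂ := by rw [hdb₁]; exact hbb
            exact fan_extend hadj hb₂ hQp hQB haB haQ hdB hdb₂ hRp
              (fun x hx h2 => hRD x hx (h2.elim (fun h => Or.inr (Or.inl h))
                (fun h => Or.inr (Or.inr h))))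
          · exact fan_extend hadj hb₁ hPp hPB haB haP hdB hdb₁ hRp
              (fun x hx h2 => hRD x hx (h2.elim Or.inl (fun h => Or.inr (Or.inr h))))
        · have hdv : dd ≠ v := fun h => hvR (h ▸ R.end_mem_support)
          have hdPQ : dd ∈ P.support ∨ dd ∈ Q.support := by
            rcases hdD with h | h | h
            exacts [Or.inl h, Or.inr h, absurd h hdB]
          rcases hdPQ with hdP | hdQ
          · exact fan_reroute hadj hb₁ hb₂ hbb hPp hQp hPB hQB hPQ haB haQ hdP hdB hdv
              hRp hvR hRD
          · exact fan_reroute hadj hb₂ hb₁ hbb.symm hQp hPp hQB hPB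
              (fun x h1 h2 => hPQ x h2 h1) haB haP hdQ hdB hdv hRp hvR
              (fun x hx h2 => hRD x hx (by tauto))

lemma exists_third [Fintype V] (h : 3 ≤ Nat.card V) (x y : V) :
    ∃ z : V, z ≠ x ∧ z ≠ y := by
  by_contra h'
  push_neg at h'
  have hsub : (Finset.univ : Finset V) ⊆ {x, y} := by
    intro z _
    simp only [Finset.mem_insert, Finset.mem_singleton]
    rcases eq_or_ne z x with h1 | h1
    · exact Or.inl h1
    · exact Or.inr (h' z h1)
  have hle := Finset.card_le_card hsub
  have h2 : ({x, y} : Finset V).card ≤ 2 :=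
    le_trans (Finset.card_insert_le _ _) (by simp)
  rw [Nat.card_eq_fintype_card, ← Finset.card_univ] at h
  omega

end Helpers

/-- A 2-connected subcubic graph that contains two edge-disjoint odd cycles
contains a skewed theta. -/
theorem stmt_0 {V : Type u} [Fintype V] (G : SimpleGraph V)
    (h2 : TwoConnected G) (h3 : Subcubic G)
    (a b : V) (c₁ : G.Walk a a) (c₂ : G.Walk b b)
    (hc₁ : c₁.IsCycle) (hc₂ : c₂.IsCycle)
    (ho₁ : Odd c₁.length) (ho₂ : Odd c₂.length)
    (hdisj : WalkEdgeDisjoint c₁ c₂) :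
    HasSkewedTheta G := by
  classical
  obtain ⟨hcard, hconn⟩ := h2
  have hvd : ∀ v, v ∈ c₁.support → v ∈ c₂.support → False :=
    fun v hv1 hv2 => cycles_vertex_disjoint h3 hc₁ hc₂ hdisj hv1 hv2
  have hab : a ≠ b := fun h => hvd a c₁.start_mem_support (h ▸ c₂.start_mem_support)
  -- two distinct vertices on c₂
  obtain ⟨x₂, y₂', hxy₂, hex₂, hey₂⟩ := cycle_nbrs hc₂
  have hx₂supp : x₂ ∈ c₂.support := Walk.snd_mem_support_of_mem_edges c₂ hex₂
  have hbx₂ : b ≠ x₂ := (Walk.adj_of_mem_edges c₂ hex₂).ne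
  set B : Set V := {x | x ∈ c₂.support} with hBdef
  have hbB : b ∈ B := c₂.start_mem_support
  have hx₂B : x₂ ∈ B := hx₂supp
  have haB : a ∉ B := fun h => hvd a c₁.start_mem_support h
  -- an initial walk from a into B
  obtain ⟨z, hza, hzb⟩ := exists_third hcard a b
  obtain ⟨w0, -⟩ := walk_avoiding hconn (Ne.symm hza) (Ne.symm hzb)
  have hfan : IsFan G B a :=
    fan_lemma hconn hbB hx₂B hbx₂ w0.length a haB ⟨b, hbB, w0, le_refl _⟩
  obtain ⟨p₂v, q₂v, P, Q, hp₂B, hq₂B, hpq₂, hPp, hQp, hPB, hQB, hPQ⟩ := hfan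
  -- truncate P and Q at their last vertex on c₁
  have haC1 : a ∈ ({x | x ∈ c₁.support} : Set V) := c₁.start_mem_support
  obtain ⟨p₁v, hp₁C1, R₁, hR₁p, hR₁sub, hR₁meet⟩ :=
    exists_trunc {x | x ∈ c₁.support} P.reverse haC1
  obtain ⟨q₁v, hq₁C1, R₂, hR₂p, hR₂sub, hR₂meet⟩ :=
    exists_trunc {x | x ∈ c₁.support} Q.reverse haC1
  set P' := R₁.reverse with hP'def
  set Q' := R₂.reverse with hQ'def
  have hP'p : P'.IsPath := hR₁p.reverse
  have hQ'p : Q'.IsPath := hR₂p.reverse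
  have hP'sub : ∀ x ∈ P'.support, x ∈ P.support := by
    intro x hx
    rw [hP'def, Walk.support_reverse, List.mem_reverse] at hx
    have := hR₁sub x hx
    rwa [Walk.support_reverse, List.mem_reverse] at this
  have hQ'sub : ∀ x ∈ Q'.support, x ∈ Q.support := by
    intro x hx
    rw [hQ'def, Walk.support_reverse, List.mem_reverse] at hx
    have := hR₂sub x hx
    rwa [Walk.support_reverse, List.mem_reverse] at this
  have hP'C1 : ∀ x ∈ P'.support, x ∈ c₁.support → x = p₁v := by
    intro x hx hx1
    rw [hP'def, Walk.support_reverse, List.mem_reverse] at hx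
    exact hR₁meet x hx hx1
  have hQ'C1 : ∀ x ∈ Q'.support, x ∈ c₁.support → x = q₁v := by
    intro x hx hx1
    rw [hQ'def, Walk.support_reverse, List.mem_reverse] at hx
    exact hR₂meet x hx hx1
  have hP'B : ∀ x ∈ P'.support, x ∈ B → x = p₂v := fun x hx hxB => hPB x (hP'sub x hx) hxB
  have hQ'B : ∀ x ∈ Q'.support, x ∈ B → x = q₂v := fun x hx hxB => hQB x (hQ'sub x hx) hxB
  have hp₂C2 : p₂v ∈ c₂.support := hp₂B
  have hq₂C2 : q₂v ∈ c₂.support := hq₂B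
  have hp₁p₂ : p₁v ≠ p₂v := fun h => hvd p₁v hp₁C1 (h ▸ hp₂C2)
  have hq₁q₂ : q₁v ≠ q₂v := fun h => hvd q₁v hq₁C1 (h ▸ hq₂C2)
  -- branch vertices are distinct
  have hp₁q₁ : p₁v ≠ q₁v := by
    intro heq
    have h1 : p₁v ∈ P.support := hP'sub p₁v P'.start_mem_support
    have h2' : q₁v ∈ Q.support := hQ'sub q₁v Q'.start_mem_support
    have h2 : p₁v ∈ Q.support := heq ▸ h2'
    have hpa : p₁v = a := hPQ p₁v h1 h2
    have hqa : q₁v = a := heq ▸ hpa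
    -- second vertices of P' and Q'
    obtain ⟨xP, hadjP, tP, htP⟩ := Walk.not_nil_iff.mp (Walk.not_nil_of_ne hp₁p₂ : ¬ P'.Nil)
    obtain ⟨xQ, hadjQ, tQ, htQ⟩ := Walk.not_nil_iff.mp (Walk.not_nil_of_ne hq₁q₂ : ¬ Q'.Nil)
    have hxPsup : xP ∈ P'.support := by rw [htP]; simp
    have hxQsup : xQ ∈ Q'.support := by rw [htQ]; simp
    have hxPC1 : xP ∉ c₁.support := fun h => hadjP.ne' (hP'C1 xP hxPsup h)
    have hxQC1 : xQ ∉ c₁.support := fun h => hadjQ.ne' (hQ'C1 xQ hxQsup h)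
    have hxPxQ : xP ≠ xQ := by
      intro hh
      subst hh
      have hxa := hPQ xP (hP'sub xP hxPsup) (hQ'sub xP hxQsup)
      exact hadjP.ne' (hxa.trans hpa.symm)
    obtain ⟨x₁, y₁, hxy₁, hex₁, hey₁⟩ := cycle_nbrs hc₁
    have hx₁supp : x₁ ∈ c₁.support := Walk.snd_mem_support_of_mem_edges c₁ hex₁
    have hy₁supp : y₁ ∈ c₁.support := Walk.snd_mem_support_of_mem_edges c₁ hey₁
    have hadjP' : G.Adj a xP := hpa ▸ hadjP
    have hadjQ' : G.Adj a xQ := hqa ▸ hadjQ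
    exact four_neighbors_false h3 (Walk.adj_of_mem_edges c₁ hex₁)
      (Walk.adj_of_mem_edges c₁ hey₁) hadjP' hadjQ' hxy₁
      (fun h => hxPC1 (h ▸ hx₁supp)) (fun h => hxQC1 (h ▸ hx₁supp))
      (fun h => hxPC1 (h ▸ hy₁supp)) (fun h => hxQC1 (h ▸ hy₁supp)) hxPxQ
  -- split the two cycles
  obtain ⟨A₁, A₂, hA₁p, hA₂p, hAlen, hA₁sub, hA₂sub, hA₁e, hA₂e, hAdisj⟩ :=
    cycle_split hc₁ hp₁C1 hq₁C1 hp₁q₁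
  obtain ⟨M₁, M₂, hM₁p, hM₂p, hMlen, hM₁sub, hM₂sub, hM₁e, hM₂e, hMdisj⟩ :=
    cycle_split hc₂ hp₂C2 hq₂C2 hpq₂
  -- choose middle arc of c₂ to fix parity
  obtain ⟨M, hMp, hMsub, hMe, hModd⟩ : ∃ M : G.Walk p₂v q₂v, M.IsPath ∧
      (∀ x ∈ M.support, x ∈ c₂.support) ∧ (∀ e ∈ M.edges, e ∈ c₂.edges) ∧
      Odd (P'.length + M.length + Q'.length) := by
    have hpar : Odd (P'.length + M₁.length + Q'.length) ∨
        Odd (P'.length + M₂.length + Q'.length) := by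
      have ho := ho₂
      rw [Nat.odd_iff] at ho
      rw [Nat.odd_iff, Nat.odd_iff]
      omega
    rcases hpar with h | h
    · exact ⟨M₁, hM₁p, hM₁sub, hM₁e, h⟩
    · exact ⟨M₂, hM₂p, hM₂sub, hM₂e, h⟩
  -- the outside path
  set W : G.Walk p₁v q₁v := P'.append (M.append Q'.reverse) with hWdef
  have hinner : (M.append Q'.reverse).IsPath := by
    apply append_isPath hMp hQ'p.reverse
    intro x hx1 hx2
    rw [Walk.support_reverse, List.mem_reverse] at hx2
    exact hQ'B x hx2 (hMsub x hx1)
  have hWp : W.IsPath := by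
    apply append_isPath hP'p hinner
    intro x hx1 hx2
    rw [Walk.mem_support_append_iff] at hx2
    rcases hx2 with hx2 | hx2
    · exact hP'B x hx1 (hMsub x hx2)
    · exfalso
      rw [Walk.support_reverse, List.mem_reverse] at hx2
      have hxa : x = a := hPQ x (hP'sub x hx1) (hQ'sub x hx2)
      subst hxa
      have e1 : x = p₁v := hP'C1 x hx1 c₁.start_mem_support
      have e2 : x = q₁v := hQ'C1 x hx2 c₁.start_mem_support
      exact hp₁q₁ (e1.symm.trans e2)
  have hWlen : W.length = P'.length + M.length + Q'.length := by
    simp only [hWdef, Walk.length_append, Walk.length_reverse]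
    omega
  have hWodd : Odd W.length := by rw [hWlen]; exact hModd
  -- edges of W avoid c₁
  have hWe : ∀ e ∈ W.edges, e ∉ c₁.edges := by
    intro e he hec₁
    simp only [hWdef, Walk.edges_append, List.mem_append] at he
    rcases he with he | he | he
    · exact edges_disjoint_of_single_meet p₁v hP'C1 e he hec₁
    · exact hdisj e hec₁ (hMe e he)
    · rw [Walk.edges_reverse, List.mem_reverse] at he
      exact edges_disjoint_of_single_meet q₁v hQ'C1 e he hec₁
  -- choose odd and even arcs of c₁
  obtain ⟨Ao, Ae, hAop, hAep, hAoodd, hAeeven, hAoe, hAoc, hAec⟩ :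
      ∃ Ao Ae : G.Walk p₁v q₁v, Ao.IsPath ∧ Ae.IsPath ∧ Odd Ao.length ∧ Even Ae.length ∧
        (∀ e ∈ Ao.edges, e ∉ Ae.edges) ∧ (∀ e ∈ Ao.edges, e ∈ c₁.edges) ∧
        (∀ e ∈ Ae.edges, e ∈ c₁.edges) := by
    have ho := ho₁
    rw [Nat.odd_iff] at ho
    rcases Nat.even_or_odd A₁.length with h1 | h1
    · have h2 : Odd A₂.length := by
        rw [Nat.even_iff] at h1
        rw [Nat.odd_iff]
        omega
      exact ⟨A₂, A₁, hA₂p, hA₁p, h2, h1, fun e he2 he1 => hAdisj e he1 he2, hA₂e, hA₁e⟩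
    · have h2 : Even A₂.length := by
        rw [Nat.odd_iff] at h1
        rw [Nat.even_iff]
        omega
      exact ⟨A₁, A₂, hA₁p, hA₂p, h1, h2, hAdisj, hA₁e, hA₂e⟩
  refine ⟨p₁v, q₁v, Ao, W, Ae, hAop, hWp, hAep, ?_, hAoe, ?_, hAoodd, hWodd, hAeeven⟩
  · intro e he hW'
    exact hWe e hW' (hAoc e he)
  · intro e he hae
    exact hWe e he (hAec e hae)
end

section
/- Let G be a graph with a bipartition P = (A,B) of its vertex set, and let F = E(X,Y) be an edge cut of G separating X from Y = V(G)\X. Define P' = (A △ X, B △ X) (symmetric differences). Then every P-odd edge in F becomes P'-even, every P-even edge in F becomes P'-odd, and every edge outside F keeps its parity status. In particular, if F contains more P-odd edges than P-even edges, then the number of P'-odd edges of G is strictly smaller than the number of P-odd edges. -/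
open SimpleGraph

attribute [local instance] Classical.propDecidable

universe u

variable {V : Type u}

lemma stmt3_podd_mk (A : Set V) (x y : V) : POdd A s(x,y) ↔ ((x ∈ A) ↔ (y ∈ A)) := by
  simp only [POdd, Sym2.mem_iff, forall_eq_or_imp, forall_eq]; tauto

lemma stmt3_cut_mk (X : Set V) (x y : V) :
    ((∃ a ∈ s(x,y), a ∈ X) ∧ (∃ b ∈ s(x,y), b ∉ X)) ↔ ¬((x ∈ X) ↔ (y ∈ X)) := by
  simp only [Sym2.mem_iff, exists_eq_or_imp, exists_eq_left]; tauto

lemma stmt3_key (A X : Set V) (e : Sym2 V) :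
    POdd (symmDiff A X) e ↔
      ((((∃ a ∈ e, a ∈ X) ∧ (∃ b ∈ e, b ∉ X)) ∧ ¬ POdd A e) ∨
       (¬((∃ a ∈ e, a ∈ X) ∧ (∃ b ∈ e, b ∉ X)) ∧ POdd A e)) := by
  induction e using Sym2.ind with
  | _ x y =>
    rw [stmt3_podd_mk, stmt3_podd_mk, stmt3_cut_mk, Set.mem_symmDiff, Set.mem_symmDiff]
    tauto

lemma stmt3_abs1 {c p q : Prop} (h : q ↔ (c ∧ ¬p) ∨ (¬c ∧ p)) (hc : c) : p ↔ ¬q := by tauto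

lemma stmt3_abs2 {c p q : Prop} (h : q ↔ (c ∧ ¬p) ∨ (¬c ∧ p)) (hc : c) : ¬p ↔ q := by tauto

lemma stmt3_abs3 {c p q : Prop} (h : q ↔ (c ∧ ¬p) ∨ (¬c ∧ p)) (hc : ¬c) : p ↔ q := by tauto

lemma stmt3_abs4 {E c p q : Prop} (h : q ↔ (c ∧ ¬p) ∨ (¬c ∧ p)) :
    (E ∧ q) ↔ (E ∧ (c ∧ ¬p)) ∨ (E ∧ (¬c ∧ p)) := by tauto

lemma stmt3_abs5 {E c p : Prop} : (E ∧ p) ↔ (E ∧ (c ∧ p)) ∨ (E ∧ (¬c ∧ p)) := by tauto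

/-- Flipping a bipartition along an edge cut `F = E(X, V \ X)`:
edges of the cut switch parity, edges outside keep it; in particular if the cut
has more P-odd than P-even edges, the total number of odd edges strictly drops. -/
theorem stmt_3 {V : Type u} [Fintype V] (G : SimpleGraph V)
    (A B : Set V) (hd : Disjoint A B) (hu : A ∪ B = Set.univ) (X : Set V) :
    (∀ e ∈ G.edgeSet, ((∃ a ∈ e, a ∈ X) ∧ (∃ b ∈ e, b ∉ X)) →
        (POdd A e ↔ ¬ POdd (symmDiff A X) e)) ∧
    (∀ e ∈ G.edgeSet, ((∃ a ∈ e, a ∈ X) ∧ (∃ b ∈ e, b ∉ X)) →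
        (¬ POdd A e ↔ POdd (symmDiff A X) e)) ∧
    (∀ e ∈ G.edgeSet, ¬ ((∃ a ∈ e, a ∈ X) ∧ (∃ b ∈ e, b ∉ X)) →
        (POdd A e ↔ POdd (symmDiff A X) e)) ∧
    ({e ∈ G.edgeSet | ((∃ a ∈ e, a ∈ X) ∧ (∃ b ∈ e, b ∉ X)) ∧ ¬ POdd A e}.ncard <
        {e ∈ G.edgeSet | ((∃ a ∈ e, a ∈ X) ∧ (∃ b ∈ e, b ∉ X)) ∧ POdd A e}.ncard →
      {e ∈ G.edgeSet | POdd (symmDiff A X) e}.ncard <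
        {e ∈ G.edgeSet | POdd A e}.ncard) := by
  classical
  refine ⟨fun e _ hc => stmt3_abs1 (stmt3_key A X e) hc,
    fun e _ hc => stmt3_abs2 (stmt3_key A X e) hc,
    fun e _ hc => stmt3_abs3 (stmt3_key A X e) hc, ?_⟩
  intro hlt
  have h1 : {e ∈ G.edgeSet | POdd (symmDiff A X) e}
      = {e ∈ G.edgeSet | ((∃ a ∈ e, a ∈ X) ∧ (∃ b ∈ e, b ∉ X)) ∧ ¬ POdd A e} ∪
        {e ∈ G.edgeSet | ¬ ((∃ a ∈ e, a ∈ X) ∧ (∃ b ∈ e, b ∉ X)) ∧ POdd A e} := by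
    ext e
    exact stmt3_abs4 (stmt3_key A X e)
  have h2 : {e ∈ G.edgeSet | POdd A e}
      = {e ∈ G.edgeSet | ((∃ a ∈ e, a ∈ X) ∧ (∃ b ∈ e, b ∉ X)) ∧ POdd A e} ∪
        {e ∈ G.edgeSet | ¬ ((∃ a ∈ e, a ∈ X) ∧ (∃ b ∈ e, b ∉ X)) ∧ POdd A e} := by
    ext e
    exact stmt3_abs5
  have d1 : Disjoint
      {e ∈ G.edgeSet | ((∃ a ∈ e, a ∈ X) ∧ (∃ b ∈ e, b ∉ X)) ∧ ¬ POdd A e}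
      {e ∈ G.edgeSet | ¬ ((∃ a ∈ e, a ∈ X) ∧ (∃ b ∈ e, b ∉ X)) ∧ POdd A e} := by
    rw [Set.disjoint_left]
    rintro e ⟨_, hc, _⟩ ⟨_, hnc, _⟩
    exact hnc hc
  have d2 : Disjoint
      {e ∈ G.edgeSet | ((∃ a ∈ e, a ∈ X) ∧ (∃ b ∈ e, b ∉ X)) ∧ POdd A e}
      {e ∈ G.edgeSet | ¬ ((∃ a ∈ e, a ∈ X) ∧ (∃ b ∈ e, b ∉ X)) ∧ POdd A e} := by
    rw [Set.disjoint_left]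
    rintro e ⟨_, hc, _⟩ ⟨_, hnc, _⟩
    exact hnc hc
  rw [h1, h2, Set.ncard_union_eq d1 (Set.toFinite _) (Set.toFinite _),
    Set.ncard_union_eq d2 (Set.toFinite _) (Set.toFinite _)]
  exact Nat.add_lt_add_right hlt _
end

section
/- Let G be a subcubic graph with a bipartition P, let r1r2 and s1s2 be two P-odd edges, and let R1 = r1...s1 and R2 = r2...s2 be two disjoint paths consisting of P-even edges. If G contains no skewed theta, then G cannot contain three edge-disjoint R1–R2-paths consisting of P-even edges. -/
open SimpleGraph

attribute [local instance] Classical.propDecidable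

universe u

variable {V : Type u}

section lemmas

variable {G : SimpleGraph V} {A : Set V}

lemma not_podd_side {x y : V} (h : ¬ POdd A s(x, y)) : ¬ (x ∈ A ↔ y ∈ A) := by
  simp only [POdd, Sym2.mem_iff, forall_eq_or_imp, forall_eq] at h
  tauto

lemma podd_side {x y : V} (h : POdd A s(x, y)) : x ∈ A ↔ y ∈ A := by
  simp only [POdd, Sym2.mem_iff, forall_eq_or_imp, forall_eq] at h
  tauto

lemma parity_walk : ∀ {x y : V} (w : G.Walk x y),
    (∀ e ∈ w.edges, ¬ POdd A e) → ((x ∈ A ↔ y ∈ A) ↔ Even w.length)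
  | _, _, Walk.nil, _ => by simp
  | x, y, @Walk.cons _ _ _ z _ h p, he => by
    have h1 : ¬ (x ∈ A ↔ z ∈ A) := not_podd_side (he s(x, z) (by simp))
    have h2 := parity_walk p (fun e hep => he e (by simp [hep]))
    simp only [Walk.length_cons, Nat.even_add_one]
    tauto

lemma isPath_append_aux {u v w : V} {p : G.Walk u v} {q : G.Walk v w} (hp : p.IsPath)
    (hq : q.IsPath) (h : ∀ x, x ∈ p.support → x ∈ q.support → x = v) :
    (p.append q).IsPath := by
  rw [Walk.isPath_def, Walk.support_append]
  refine List.Nodup.append hp.support_nodup (hq.support_nodup.sublist (List.tail_sublist _)) ?_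
  intro a hap hat
  have haq : a ∈ q.support := List.mem_of_mem_tail hat
  have : a = v := h a hap haq
  subst this
  have := hq.support_nodup
  rw [q.support_eq_cons] at this
  exact (List.nodup_cons.mp this).1 hat

lemma cross_edges {u v a b : V} {X : G.Walk u v} {R : G.Walk a b} {u₀ : V}
    (hmeet : ∀ z, z ∈ X.support → z ∈ R.support → z = u₀) :
    ∀ e ∈ X.edges, e ∉ R.edges := by
  intro e heX heR
  induction e using Sym2.ind with
  | _ x y =>
    have hx : x = u₀ := hmeet x (X.fst_mem_support_of_mem_edges heX)
      (R.fst_mem_support_of_mem_edges heR)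
    have hy : y = u₀ := hmeet y (X.snd_mem_support_of_mem_edges heX)
      (R.snd_mem_support_of_mem_edges heR)
    exact G.irrefl (hx ▸ hy ▸ X.adj_of_mem_edges heX)

lemma edgeDisj_take_drop {u v x : V} {p : G.Walk u v} (hp : p.IsTrail) (hx : x ∈ p.support) :
    ∀ e ∈ (p.takeUntil x hx).edges, e ∉ (p.dropUntil x hx).edges := by
  have h2 : ((p.takeUntil x hx).append (p.dropUntil x hx)).edges.Nodup := by
    rw [Walk.take_spec]; exact hp.edges_nodup
  rw [Walk.edges_append] at h2
  exact fun e he => List.disjoint_of_nodup_append h2 he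

lemma mem_dropUntil_of_le {x y : V} : ∀ {u v : V} (p : G.Walk u v) (hx : x ∈ p.support)
    (hy : y ∈ p.support),
    (p.takeUntil x hx).length ≤ (p.takeUntil y hy).length → y ∈ (p.dropUntil x hx).support := by
  intro u v p
  induction p with
  | nil =>
    intro hx hy _
    rw [Walk.mem_support_nil_iff] at hx hy
    subst hx; subst hy
    exact Walk.start_mem_support _
  | @cons a b c adj p ih =>
    intro hx hy hlen
    by_cases hax : a = x
    · subst hax
      simp only [Walk.dropUntil, dif_pos rfl]
      exact hy
    · by_cases hay : a = y
      · exfalso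
        subst hay
        have h1 : ((Walk.cons adj p).takeUntil a (Walk.start_mem_support _)).length = 0 := by
          simp only [Walk.takeUntil, dif_pos rfl]
          rfl
        have hx' : x ∈ p.support := by
          cases hx with
          | head => exact absurd rfl hax
          | tail _ h => exact h
        have h2 : ((Walk.cons adj p).takeUntil x hx).length =
            ((p.takeUntil x hx').length) + 1 := by
          simp only [Walk.takeUntil, dif_neg hax]
          rfl
        omega
      · have hx' : x ∈ p.support := by
          cases hx with
          | head => exact absurd rfl hax
          | tail _ h => exact h
        have hy' : y ∈ p.support := by
          cases hy with
          | head => exact absurd rfl hay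
          | tail _ h => exact h
        have h2 : ((Walk.cons adj p).takeUntil x hx).length =
            ((p.takeUntil x hx').length) + 1 := by
          simp only [Walk.takeUntil, dif_neg hax]
          rfl
        have h3 : ((Walk.cons adj p).takeUntil y hy).length =
            ((p.takeUntil y hy').length) + 1 := by
          simp only [Walk.takeUntil, dif_neg hay]
          rfl
        have h4 : (Walk.cons adj p).dropUntil x hx = p.dropUntil x hx' := by
          simp only [Walk.dropUntil, dif_neg hax]
        rw [h4]
        exact ih hx' hy' (by omega)

end lemmas

section pairs
variable {G : SimpleGraph V} {A : Set V} {r₁ r₂ s₁ s₂ : V}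
  {R₁ : G.Walk r₁ s₁} {R₂ : G.Walk r₂ s₂}

lemma edges_disj_of_support_disj {a b c d : V} {R : G.Walk a b} {S : G.Walk c d}
    (h : R.support.Disjoint S.support) : ∀ e ∈ R.edges, e ∉ S.edges := by
  intro e he1 he2
  induction e using Sym2.ind with
  | _ x y => exact h (R.fst_mem_support_of_mem_edges he1) (S.fst_mem_support_of_mem_edges he2)

lemma iff_parity_helper {P Q R S : Prop} (hPQ : P ↔ Q) (h : ¬ (R ↔ S)) :
    (P ↔ R) ↔ ¬ (Q ↔ S) := by tauto

set_option maxHeartbeats 1000000 in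
lemma pairA (hr : G.Adj r₁ r₂) (hroA : r₁ ∈ A ↔ r₂ ∈ A)
    (hR₁ : R₁.IsPath) (hR₂ : R₂.IsPath) (hRdisj : R₁.support.Disjoint R₂.support)
    (hRe₁ : ∀ e ∈ R₁.edges, ¬ POdd A e) (hRe₂ : ∀ e ∈ R₂.edges, ¬ POdd A e)
    {x₁ x₂ y₁ y₂ : V} {X : G.Walk x₁ x₂} {Y : G.Walk y₁ y₂}
    (hX : X.IsPath) (hY : Y.IsPath)
    (hx₁ : x₁ ∈ R₁.support) (hx₂ : x₂ ∈ R₂.support)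
    (hy₁ : y₁ ∈ R₁.support) (hy₂ : y₂ ∈ R₂.support)
    (hXe : ∀ e ∈ X.edges, ¬ POdd A e) (hYe : ∀ e ∈ Y.edges, ¬ POdd A e)
    (hXm₁ : ∀ z ∈ X.support, z ∈ R₁.support → z = x₁)
    (hXm₂ : ∀ z ∈ X.support, z ∈ R₂.support → z = x₂)
    (hYm₁ : ∀ z ∈ Y.support, z ∈ R₁.support → z = y₁)
    (hYm₂ : ∀ z ∈ Y.support, z ∈ R₂.support → z = y₂)
    (hXY : ∀ e ∈ X.edges, e ∉ Y.edges)
    (hXodd : ¬ (x₁ ∈ A ↔ x₂ ∈ A))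
    (h1 : y₁ ∈ (R₁.dropUntil x₁ hx₁).support)
    (h2 : y₂ ∈ (R₂.dropUntil x₂ hx₂).support) :
    HasSkewedTheta G := by
  classical
  set T₁ := R₁.takeUntil x₁ hx₁ with hT₁def
  set D₁ := R₁.dropUntil x₁ hx₁ with hD₁def
  set T₂ := R₂.takeUntil x₂ hx₂ with hT₂def
  set D₂ := R₂.dropUntil x₂ hx₂ with hD₂def
  set S₁ := D₁.takeUntil y₁ h1 with hS₁def
  set S₂ := D₂.takeUntil y₂ h2 with hS₂def
  -- support subset facts
  have sT₁ : T₁.support ⊆ R₁.support := Walk.support_takeUntil_subset _ _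
  have sT₂ : T₂.support ⊆ R₂.support := Walk.support_takeUntil_subset _ _
  have sS₁ : S₁.support ⊆ R₁.support :=
    fun z hz => Walk.support_dropUntil_subset _ _ (Walk.support_takeUntil_subset _ _ hz)
  have sS₂ : S₂.support ⊆ R₂.support :=
    fun z hz => Walk.support_dropUntil_subset _ _ (Walk.support_takeUntil_subset _ _ hz)
  -- edge subset facts
  have eT₁ : T₁.edges ⊆ R₁.edges := Walk.edges_takeUntil_subset _ _
  have eT₂ : T₂.edges ⊆ R₂.edges := Walk.edges_takeUntil_subset _ _
  have eS₁D : S₁.edges ⊆ D₁.edges := Walk.edges_takeUntil_subset _ _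
  have eS₂D : S₂.edges ⊆ D₂.edges := Walk.edges_takeUntil_subset _ _
  have eS₁ : S₁.edges ⊆ R₁.edges := fun e he => Walk.edges_dropUntil_subset _ _ (eS₁D he)
  have eS₂ : S₂.edges ⊆ R₂.edges := fun e he => Walk.edges_dropUntil_subset _ _ (eS₂D he)
  -- cross edge facts
  have cXR₁ : ∀ e ∈ X.edges, e ∉ R₁.edges := cross_edges hXm₁
  have cXR₂ : ∀ e ∈ X.edges, e ∉ R₂.edges := cross_edges hXm₂
  have cYR₁ : ∀ e ∈ Y.edges, e ∉ R₁.edges := cross_edges hYm₁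
  have cYR₂ : ∀ e ∈ Y.edges, e ∉ R₂.edges := cross_edges hYm₂
  have cRR : ∀ e ∈ R₁.edges, e ∉ R₂.edges := edges_disj_of_support_disj hRdisj
  have hrR₁ : s(r₁, r₂) ∉ R₁.edges :=
    fun h => hRdisj (R₁.snd_mem_support_of_mem_edges h) R₂.start_mem_support
  have hrR₂ : s(r₁, r₂) ∉ R₂.edges :=
    fun h => hRdisj R₁.start_mem_support (R₂.fst_mem_support_of_mem_edges h)
  have hrX : s(r₁, r₂) ∉ X.edges := fun h => not_podd_side (hXe _ h) hroA
  have hrY : s(r₁, r₂) ∉ Y.edges := fun h => not_podd_side (hYe _ h) hroA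
  have tdR₁ : ∀ e ∈ T₁.edges, e ∉ D₁.edges := edgeDisj_take_drop hR₁.isTrail hx₁
  have tdR₂ : ∀ e ∈ T₂.edges, e ∉ D₂.edges := edgeDisj_take_drop hR₂.isTrail hx₂
  -- path facts
  have pS₁ : S₁.IsPath := (hR₁.dropUntil hx₁).takeUntil h1
  have pS₂ : S₂.IsPath := (hR₂.dropUntil hx₂).takeUntil h2
  -- the three walks
  set w₂ : G.Walk x₁ x₂ := S₁.append (Y.append S₂.reverse) with hw₂def
  set w₃ : G.Walk x₁ x₂ := T₁.reverse.append (Walk.cons hr T₂) with hw₃def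
  have hw₂edges : ∀ e, e ∈ w₂.edges ↔ e ∈ S₁.edges ∨ e ∈ Y.edges ∨ e ∈ S₂.edges := by
    intro e
    simp [hw₂def, Walk.edges_append, Walk.edges_reverse, List.mem_reverse, or_assoc]
  have hw₃edges : ∀ e, e ∈ w₃.edges ↔ e ∈ T₁.edges ∨ e = s(r₁, r₂) ∨ e ∈ T₂.edges := by
    intro e
    simp [hw₃def, Walk.edges_append, Walk.edges_reverse, Walk.edges_cons, List.mem_reverse,
      or_assoc]
  have pw₂ : w₂.IsPath := by
    refine isPath_append_aux pS₁ (isPath_append_aux hY pS₂.reverse ?_) ?_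
    · intro z hz1 hz2
      refine hYm₂ z hz1 (sS₂ ?_)
      simpa [Walk.support_reverse] using hz2
    · intro z hz1 hz2
      rw [Walk.mem_support_append_iff] at hz2
      rcases hz2 with hz2 | hz2
      · exact hYm₁ z hz2 (sS₁ hz1)
      · exact absurd (hRdisj (sS₁ hz1) (sS₂ (by simpa [Walk.support_reverse] using hz2))) id
  have pw₃ : w₃.IsPath := by
    refine isPath_append_aux (hR₁.takeUntil hx₁).reverse ?_ ?_
    · rw [Walk.cons_isPath_iff]
      exact ⟨hR₂.takeUntil hx₂, fun h => hRdisj R₁.start_mem_support (sT₂ h)⟩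
    · intro z hz1 hz2
      have hz1' : z ∈ R₁.support := sT₁ (by simpa [Walk.support_reverse] using hz1)
      rw [Walk.support_cons] at hz2
      rcases List.mem_cons.mp hz2 with rfl | hz2
      · rfl
      · exact absurd (hRdisj hz1' (sT₂ hz2)) id
  have lw₁ : Odd X.length := by
    rw [← Nat.not_even_iff_odd]
    exact fun h => hXodd ((parity_walk X hXe).mpr h)
  have hw₂e : ∀ e ∈ w₂.edges, ¬ POdd A e := by
    intro e he
    rcases (hw₂edges e).mp he with h | h | h
    · exact hRe₁ e (eS₁ h)
    · exact hYe e h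
    · exact hRe₂ e (eS₂ h)
  have lw₂ : Odd w₂.length := by
    rw [← Nat.not_even_iff_odd]
    exact fun h => hXodd ((parity_walk w₂ hw₂e).mpr h)
  have lw₃ : Even w₃.length := by
    have hT₁len := parity_walk T₁ (fun e he => hRe₁ e (eT₁ he))
    have hT₂len := parity_walk T₂ (fun e he => hRe₂ e (eT₂ he))
    have hlen : w₃.length = T₁.length + (T₂.length + 1) := by
      simp [hw₃def, Walk.length_append, Walk.length_reverse, Walk.length_cons]
    rw [hlen, Nat.even_add, Nat.even_add_one, ← hT₁len, ← hT₂len]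
    exact iff_parity_helper hroA hXodd
  refine ⟨x₁, x₂, X, w₂, w₃, hX, pw₂, pw₃, ?_, ?_, ?_, lw₁, lw₂, lw₃⟩
  · intro e he1 he2
    rcases (hw₂edges e).mp he2 with h | h | h
    · exact cXR₁ e he1 (eS₁ h)
    · exact hXY e he1 h
    · exact cXR₂ e he1 (eS₂ h)
  · intro e he1 he2
    rcases (hw₃edges e).mp he2 with h | rfl | h
    · exact cXR₁ e he1 (eT₁ h)
    · exact hrX he1
    · exact cXR₂ e he1 (eT₂ h)
  · intro e he1 he2
    rcases (hw₂edges e).mp he1 with h | h | h <;>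
      rcases (hw₃edges e).mp he2 with h' | rfl | h'
    · exact tdR₁ e h' (eS₁D h)
    · exact hrR₁ (eS₁ h)
    · exact cRR e (eS₁ h) (eT₂ h')
    · exact cYR₁ e h (eT₁ h')
    · exact hrY h
    · exact cYR₂ e h (eT₂ h')
    · exact cRR e (eT₁ h') (eS₂ h)
    · exact hrR₂ (eS₂ h)
    · exact tdR₂ e h' (eS₂D h)


set_option maxHeartbeats 1000000 in
lemma pairB (hr : G.Adj r₁ r₂) (hroA : r₁ ∈ A ↔ r₂ ∈ A)
    (hR₁ : R₁.IsPath) (hR₂ : R₂.IsPath) (hRdisj : R₁.support.Disjoint R₂.support)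
    (hRe₁ : ∀ e ∈ R₁.edges, ¬ POdd A e) (hRe₂ : ∀ e ∈ R₂.edges, ¬ POdd A e)
    {x₁ x₂ y₁ y₂ : V} {X : G.Walk x₁ x₂} {Y : G.Walk y₁ y₂}
    (hX : X.IsPath) (hY : Y.IsPath)
    (hx₁ : x₁ ∈ R₁.support) (hx₂ : x₂ ∈ R₂.support)
    (hy₁ : y₁ ∈ R₁.support) (hy₂ : y₂ ∈ R₂.support)
    (hXe : ∀ e ∈ X.edges, ¬ POdd A e) (hYe : ∀ e ∈ Y.edges, ¬ POdd A e)
    (hXm₁ : ∀ z ∈ X.support, z ∈ R₁.support → z = x₁)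
    (hXm₂ : ∀ z ∈ X.support, z ∈ R₂.support → z = x₂)
    (hYm₁ : ∀ z ∈ Y.support, z ∈ R₁.support → z = y₁)
    (hYm₂ : ∀ z ∈ Y.support, z ∈ R₂.support → z = y₂)
    (hXY : ∀ e ∈ X.edges, e ∉ Y.edges)
    (hcross : ¬ (x₁ ∈ A ↔ y₂ ∈ A))
    (h1 : y₁ ∈ (R₁.dropUntil x₁ hx₁).support)
    (h2 : x₂ ∈ (R₂.dropUntil y₂ hy₂).support) :
    HasSkewedTheta G := by
  classical
  set T₁ := R₁.takeUntil x₁ hx₁ with hT₁def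
  set D₁ := R₁.dropUntil x₁ hx₁ with hD₁def
  set T₂ := R₂.takeUntil y₂ hy₂ with hT₂def
  set D₂ := R₂.dropUntil y₂ hy₂ with hD₂def
  set S₁ := D₁.takeUntil y₁ h1 with hS₁def
  set S₂ := D₂.takeUntil x₂ h2 with hS₂def
  have sT₁ : T₁.support ⊆ R₁.support := Walk.support_takeUntil_subset _ _
  have sT₂ : T₂.support ⊆ R₂.support := Walk.support_takeUntil_subset _ _
  have sS₁ : S₁.support ⊆ R₁.support :=
    fun z hz => Walk.support_dropUntil_subset _ _ (Walk.support_takeUntil_subset _ _ hz)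
  have sS₂ : S₂.support ⊆ R₂.support :=
    fun z hz => Walk.support_dropUntil_subset _ _ (Walk.support_takeUntil_subset _ _ hz)
  have eT₁ : T₁.edges ⊆ R₁.edges := Walk.edges_takeUntil_subset _ _
  have eT₂ : T₂.edges ⊆ R₂.edges := Walk.edges_takeUntil_subset _ _
  have eS₁D : S₁.edges ⊆ D₁.edges := Walk.edges_takeUntil_subset _ _
  have eS₂D : S₂.edges ⊆ D₂.edges := Walk.edges_takeUntil_subset _ _
  have eS₁ : S₁.edges ⊆ R₁.edges := fun e he => Walk.edges_dropUntil_subset _ _ (eS₁D he)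
  have eS₂ : S₂.edges ⊆ R₂.edges := fun e he => Walk.edges_dropUntil_subset _ _ (eS₂D he)
  have cXR₁ : ∀ e ∈ X.edges, e ∉ R₁.edges := cross_edges hXm₁
  have cXR₂ : ∀ e ∈ X.edges, e ∉ R₂.edges := cross_edges hXm₂
  have cYR₁ : ∀ e ∈ Y.edges, e ∉ R₁.edges := cross_edges hYm₁
  have cYR₂ : ∀ e ∈ Y.edges, e ∉ R₂.edges := cross_edges hYm₂
  have cRR : ∀ e ∈ R₁.edges, e ∉ R₂.edges := edges_disj_of_support_disj hRdisj
  have hrR₁ : s(r₁, r₂) ∉ R₁.edges :=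
    fun h => hRdisj (R₁.snd_mem_support_of_mem_edges h) R₂.start_mem_support
  have hrR₂ : s(r₁, r₂) ∉ R₂.edges :=
    fun h => hRdisj R₁.start_mem_support (R₂.fst_mem_support_of_mem_edges h)
  have hrX : s(r₁, r₂) ∉ X.edges := fun h => not_podd_side (hXe _ h) hroA
  have hrY : s(r₁, r₂) ∉ Y.edges := fun h => not_podd_side (hYe _ h) hroA
  have tdR₁ : ∀ e ∈ T₁.edges, e ∉ D₁.edges := edgeDisj_take_drop hR₁.isTrail hx₁
  have tdR₂ : ∀ e ∈ T₂.edges, e ∉ D₂.edges := edgeDisj_take_drop hR₂.isTrail hy₂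
  have pS₁ : S₁.IsPath := (hR₁.dropUntil hx₁).takeUntil h1
  have pS₂ : S₂.IsPath := (hR₂.dropUntil hy₂).takeUntil h2
  set w₁ : G.Walk x₁ y₂ := X.append S₂.reverse with hw₁def
  set w₂ : G.Walk x₁ y₂ := S₁.append Y with hw₂def
  set w₃ : G.Walk x₁ y₂ := T₁.reverse.append (Walk.cons hr T₂) with hw₃def
  have hw₁edges : ∀ e, e ∈ w₁.edges ↔ e ∈ X.edges ∨ e ∈ S₂.edges := by
    intro e
    simp [hw₁def, Walk.edges_append, Walk.edges_reverse, List.mem_reverse]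
  have hw₂edges : ∀ e, e ∈ w₂.edges ↔ e ∈ S₁.edges ∨ e ∈ Y.edges := by
    intro e
    simp [hw₂def, Walk.edges_append]
  have hw₃edges : ∀ e, e ∈ w₃.edges ↔ e ∈ T₁.edges ∨ e = s(r₁, r₂) ∨ e ∈ T₂.edges := by
    intro e
    simp [hw₃def, Walk.edges_append, Walk.edges_reverse, Walk.edges_cons, List.mem_reverse,
      or_assoc]
  have pw₁ : w₁.IsPath := by
    refine isPath_append_aux hX pS₂.reverse ?_
    intro z hz1 hz2
    exact hXm₂ z hz1 (sS₂ (by simpa [Walk.support_reverse] using hz2))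
  have pw₂ : w₂.IsPath := by
    refine isPath_append_aux pS₁ hY ?_
    intro z hz1 hz2
    exact hYm₁ z hz2 (sS₁ hz1)
  have pw₃ : w₃.IsPath := by
    refine isPath_append_aux (hR₁.takeUntil hx₁).reverse ?_ ?_
    · rw [Walk.cons_isPath_iff]
      exact ⟨hR₂.takeUntil hy₂, fun h => hRdisj R₁.start_mem_support (sT₂ h)⟩
    · intro z hz1 hz2
      have hz1' : z ∈ R₁.support := sT₁ (by simpa [Walk.support_reverse] using hz1)
      rw [Walk.support_cons] at hz2
      rcases List.mem_cons.mp hz2 with rfl | hz2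
      · rfl
      · exact absurd (hRdisj hz1' (sT₂ hz2)) id
  have hw₁e : ∀ e ∈ w₁.edges, ¬ POdd A e := by
    intro e he
    rcases (hw₁edges e).mp he with h | h
    · exact hXe e h
    · exact hRe₂ e (eS₂ h)
  have hw₂e : ∀ e ∈ w₂.edges, ¬ POdd A e := by
    intro e he
    rcases (hw₂edges e).mp he with h | h
    · exact hRe₁ e (eS₁ h)
    · exact hYe e h
  have lw₁ : Odd w₁.length := by
    rw [← Nat.not_even_iff_odd]
    exact fun h => hcross ((parity_walk w₁ hw₁e).mpr h)
  have lw₂ : Odd w₂.length := by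
    rw [← Nat.not_even_iff_odd]
    exact fun h => hcross ((parity_walk w₂ hw₂e).mpr h)
  have lw₃ : Even w₃.length := by
    have hT₁len := parity_walk T₁ (fun e he => hRe₁ e (eT₁ he))
    have hT₂len := parity_walk T₂ (fun e he => hRe₂ e (eT₂ he))
    have hlen : w₃.length = T₁.length + (T₂.length + 1) := by
      simp [hw₃def, Walk.length_append, Walk.length_reverse, Walk.length_cons]
    rw [hlen, Nat.even_add, Nat.even_add_one, ← hT₁len, ← hT₂len]
    exact iff_parity_helper hroA hcross
  refine ⟨x₁, y₂, w₁, w₂, w₃, pw₁, pw₂, pw₃, ?_, ?_, ?_, lw₁, lw₂, lw₃⟩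
  · intro e he1 he2
    rcases (hw₁edges e).mp he1 with h | h <;> rcases (hw₂edges e).mp he2 with h' | h'
    · exact cXR₁ e h (eS₁ h')
    · exact hXY e h h'
    · exact cRR e (eS₁ h') (eS₂ h)
    · exact cYR₂ e h' (eS₂ h)
  · intro e he1 he2
    rcases (hw₁edges e).mp he1 with h | h <;> rcases (hw₃edges e).mp he2 with h' | rfl | h'
    · exact cXR₁ e h (eT₁ h')
    · exact hrX h
    · exact cXR₂ e h (eT₂ h')
    · exact cRR e (eT₁ h') (eS₂ h)
    · exact hrR₂ (eS₂ h)
    · exact tdR₂ e h' (eS₂D h)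
  · intro e he1 he2
    rcases (hw₂edges e).mp he1 with h | h <;> rcases (hw₃edges e).mp he2 with h' | rfl | h'
    · exact tdR₁ e h' (eS₁D h)
    · exact hrR₁ (eS₁ h)
    · exact cRR e (eS₁ h) (eT₂ h')
    · exact cYR₁ e h (eT₁ h')
    · exact hrY h
    · exact cYR₂ e h (eT₂ h')

lemma iff_parity_helper₂ {P Q R S : Prop} (h : ¬ (P ↔ Q)) (hRS : R ↔ S) :
    (P ↔ R) ↔ ¬ (Q ↔ S) := by tauto

set_option maxHeartbeats 1000000 in
lemma pairC (hs : G.Adj s₁ s₂) (hsoA : s₁ ∈ A ↔ s₂ ∈ A)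
    (hR₁ : R₁.IsPath) (hR₂ : R₂.IsPath) (hRdisj : R₁.support.Disjoint R₂.support)
    (hRe₁ : ∀ e ∈ R₁.edges, ¬ POdd A e) (hRe₂ : ∀ e ∈ R₂.edges, ¬ POdd A e)
    {x₁ x₂ y₁ y₂ : V} {X : G.Walk x₁ x₂} {Y : G.Walk y₁ y₂}
    (hX : X.IsPath) (hY : Y.IsPath)
    (hx₁ : x₁ ∈ R₁.support) (hx₂ : x₂ ∈ R₂.support)
    (hy₁ : y₁ ∈ R₁.support) (hy₂ : y₂ ∈ R₂.support)
    (hXe : ∀ e ∈ X.edges, ¬ POdd A e) (hYe : ∀ e ∈ Y.edges, ¬ POdd A e)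
    (hXm₁ : ∀ z ∈ X.support, z ∈ R₁.support → z = x₁)
    (hXm₂ : ∀ z ∈ X.support, z ∈ R₂.support → z = x₂)
    (hYm₁ : ∀ z ∈ Y.support, z ∈ R₁.support → z = y₁)
    (hYm₂ : ∀ z ∈ Y.support, z ∈ R₂.support → z = y₂)
    (hXY : ∀ e ∈ X.edges, e ∉ Y.edges)
    (hcross : ¬ (y₁ ∈ A ↔ x₂ ∈ A))
    (h1 : y₁ ∈ (R₁.dropUntil x₁ hx₁).support)
    (h2 : x₂ ∈ (R₂.dropUntil y₂ hy₂).support) :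
    HasSkewedTheta G := by
  classical
  set D₁ := R₁.dropUntil x₁ hx₁ with hD₁def
  set D₂ := R₂.dropUntil y₂ hy₂ with hD₂def
  set S₁ := D₁.takeUntil y₁ h1 with hS₁def
  set S₂ := D₂.takeUntil x₂ h2 with hS₂def
  set E₁ := D₁.dropUntil y₁ h1 with hE₁def
  set E₂ := D₂.dropUntil x₂ h2 with hE₂def
  have sS₁ : S₁.support ⊆ R₁.support :=
    fun z hz => Walk.support_dropUntil_subset _ _ (Walk.support_takeUntil_subset _ _ hz)
  have sS₂ : S₂.support ⊆ R₂.support :=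
    fun z hz => Walk.support_dropUntil_subset _ _ (Walk.support_takeUntil_subset _ _ hz)
  have sE₁ : E₁.support ⊆ R₁.support :=
    fun z hz => Walk.support_dropUntil_subset _ _ (Walk.support_dropUntil_subset _ _ hz)
  have sE₂ : E₂.support ⊆ R₂.support :=
    fun z hz => Walk.support_dropUntil_subset _ _ (Walk.support_dropUntil_subset _ _ hz)
  have eS₁D : S₁.edges ⊆ D₁.edges := Walk.edges_takeUntil_subset _ _
  have eS₂D : S₂.edges ⊆ D₂.edges := Walk.edges_takeUntil_subset _ _
  have eE₁D : E₁.edges ⊆ D₁.edges := Walk.edges_dropUntil_subset _ _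
  have eE₂D : E₂.edges ⊆ D₂.edges := Walk.edges_dropUntil_subset _ _
  have eS₁ : S₁.edges ⊆ R₁.edges := fun e he => Walk.edges_dropUntil_subset _ _ (eS₁D he)
  have eS₂ : S₂.edges ⊆ R₂.edges := fun e he => Walk.edges_dropUntil_subset _ _ (eS₂D he)
  have eE₁ : E₁.edges ⊆ R₁.edges := fun e he => Walk.edges_dropUntil_subset _ _ (eE₁D he)
  have eE₂ : E₂.edges ⊆ R₂.edges := fun e he => Walk.edges_dropUntil_subset _ _ (eE₂D he)
  have cXR₁ : ∀ e ∈ X.edges, e ∉ R₁.edges := cross_edges hXm₁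
  have cXR₂ : ∀ e ∈ X.edges, e ∉ R₂.edges := cross_edges hXm₂
  have cYR₁ : ∀ e ∈ Y.edges, e ∉ R₁.edges := cross_edges hYm₁
  have cYR₂ : ∀ e ∈ Y.edges, e ∉ R₂.edges := cross_edges hYm₂
  have cRR : ∀ e ∈ R₁.edges, e ∉ R₂.edges := edges_disj_of_support_disj hRdisj
  have hsR₁ : s(s₁, s₂) ∉ R₁.edges :=
    fun h => hRdisj (R₁.snd_mem_support_of_mem_edges h) R₂.end_mem_support
  have hsR₂ : s(s₁, s₂) ∉ R₂.edges :=
    fun h => hRdisj R₁.end_mem_support (R₂.fst_mem_support_of_mem_edges h)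
  have hsX : s(s₁, s₂) ∉ X.edges := fun h => not_podd_side (hXe _ h) hsoA
  have hsY : s(s₁, s₂) ∉ Y.edges := fun h => not_podd_side (hYe _ h) hsoA
  have tdD₁ : ∀ e ∈ S₁.edges, e ∉ E₁.edges := edgeDisj_take_drop (hR₁.dropUntil hx₁).isTrail h1
  have tdD₂ : ∀ e ∈ S₂.edges, e ∉ E₂.edges := edgeDisj_take_drop (hR₂.dropUntil hy₂).isTrail h2
  have pS₁ : S₁.IsPath := (hR₁.dropUntil hx₁).takeUntil h1
  have pS₂ : S₂.IsPath := (hR₂.dropUntil hy₂).takeUntil h2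
  have pE₁ : E₁.IsPath := (hR₁.dropUntil hx₁).dropUntil h1
  have pE₂ : E₂.IsPath := (hR₂.dropUntil hy₂).dropUntil h2
  set w₁ : G.Walk y₁ x₂ := S₁.reverse.append X with hw₁def
  set w₂ : G.Walk y₁ x₂ := Y.append S₂ with hw₂def
  set w₃ : G.Walk y₁ x₂ := E₁.append (Walk.cons hs E₂.reverse) with hw₃def
  have hw₁edges : ∀ e, e ∈ w₁.edges ↔ e ∈ S₁.edges ∨ e ∈ X.edges := by
    intro e
    simp [hw₁def, Walk.edges_append, Walk.edges_reverse, List.mem_reverse]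
  have hw₂edges : ∀ e, e ∈ w₂.edges ↔ e ∈ Y.edges ∨ e ∈ S₂.edges := by
    intro e
    simp [hw₂def, Walk.edges_append]
  have hw₃edges : ∀ e, e ∈ w₃.edges ↔ e ∈ E₁.edges ∨ e = s(s₁, s₂) ∨ e ∈ E₂.edges := by
    intro e
    simp [hw₃def, Walk.edges_append, Walk.edges_reverse, Walk.edges_cons, List.mem_reverse,
      or_assoc]
  have pw₁ : w₁.IsPath := by
    refine isPath_append_aux pS₁.reverse hX ?_
    intro z hz1 hz2
    exact hXm₁ z hz2 (sS₁ (by simpa [Walk.support_reverse] using hz1))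
  have pw₂ : w₂.IsPath := by
    refine isPath_append_aux hY pS₂ ?_
    intro z hz1 hz2
    exact hYm₂ z hz1 (sS₂ hz2)
  have pw₃ : w₃.IsPath := by
    refine isPath_append_aux pE₁ ?_ ?_
    · rw [Walk.cons_isPath_iff]
      exact ⟨pE₂.reverse, fun h =>
        hRdisj R₁.end_mem_support (sE₂ (by simpa [Walk.support_reverse] using h))⟩
    · intro z hz1 hz2
      have hz1' : z ∈ R₁.support := sE₁ hz1
      rw [Walk.support_cons] at hz2
      rcases List.mem_cons.mp hz2 with rfl | hz2
      · rfl
      · exact absurd (hRdisj hz1' (sE₂ (by simpa [Walk.support_reverse] using hz2))) id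
  have hw₁e : ∀ e ∈ w₁.edges, ¬ POdd A e := by
    intro e he
    rcases (hw₁edges e).mp he with h | h
    · exact hRe₁ e (eS₁ h)
    · exact hXe e h
  have hw₂e : ∀ e ∈ w₂.edges, ¬ POdd A e := by
    intro e he
    rcases (hw₂edges e).mp he with h | h
    · exact hYe e h
    · exact hRe₂ e (eS₂ h)
  have lw₁ : Odd w₁.length := by
    rw [← Nat.not_even_iff_odd]
    exact fun h => hcross ((parity_walk w₁ hw₁e).mpr h)
  have lw₂ : Odd w₂.length := by
    rw [← Nat.not_even_iff_odd]
    exact fun h => hcross ((parity_walk w₂ hw₂e).mpr h)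
  have lw₃ : Even w₃.length := by
    have hE₁len := parity_walk E₁ (fun e he => hRe₁ e (eE₁ he))
    have hE₂len := parity_walk E₂ (fun e he => hRe₂ e (eE₂ he))
    have hlen : w₃.length = E₁.length + (E₂.length + 1) := by
      simp [hw₃def, Walk.length_append, Walk.length_reverse, Walk.length_cons]
    rw [hlen, Nat.even_add, Nat.even_add_one, ← hE₁len, ← hE₂len]
    exact iff_parity_helper₂ hcross hsoA
  refine ⟨y₁, x₂, w₁, w₂, w₃, pw₁, pw₂, pw₃, ?_, ?_, ?_, lw₁, lw₂, lw₃⟩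
  · intro e he1 he2
    rcases (hw₁edges e).mp he1 with h | h <;> rcases (hw₂edges e).mp he2 with h' | h'
    · exact cYR₁ e h' (eS₁ h)
    · exact cRR e (eS₁ h) (eS₂ h')
    · exact hXY e h h'
    · exact cXR₂ e h (eS₂ h')
  · intro e he1 he2
    rcases (hw₁edges e).mp he1 with h | h <;> rcases (hw₃edges e).mp he2 with h' | rfl | h'
    · exact tdD₁ e h h'
    · exact hsR₁ (eS₁ h)
    · exact cRR e (eS₁ h) (eE₂ h')
    · exact cXR₁ e h (eE₁ h')
    · exact hsX h
    · exact cXR₂ e h (eE₂ h')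
  · intro e he1 he2
    rcases (hw₂edges e).mp he1 with h | h <;> rcases (hw₃edges e).mp he2 with h' | rfl | h'
    · exact cYR₁ e h (eE₁ h')
    · exact hsY h
    · exact cYR₂ e h (eE₂ h')
    · exact cRR e (eE₁ h') (eS₂ h)
    · exact hsR₂ (eS₂ h)
    · exact tdD₂ e h h'

lemma iff_parity_helper₃ {P Q R S : Prop} (hPQ : P ↔ Q) (hRS : R ↔ S) :
    ¬ ((P ↔ R) ↔ ¬ (Q ↔ S)) := by tauto

set_option maxHeartbeats 1000000 in
lemma oneEven (hr : G.Adj r₁ r₂) (hs : G.Adj s₁ s₂)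
    (hroA : r₁ ∈ A ↔ r₂ ∈ A) (hsoA : s₁ ∈ A ↔ s₂ ∈ A)
    (hne : s(r₁, r₂) ≠ s(s₁, s₂))
    (hR₁ : R₁.IsPath) (hR₂ : R₂.IsPath) (hRdisj : R₁.support.Disjoint R₂.support)
    (hRe₁ : ∀ e ∈ R₁.edges, ¬ POdd A e) (hRe₂ : ∀ e ∈ R₂.edges, ¬ POdd A e)
    {x₁ x₂ : V} {X : G.Walk x₁ x₂} (hX : X.IsPath)
    (hx₁ : x₁ ∈ R₁.support) (hx₂ : x₂ ∈ R₂.support)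
    (hXe : ∀ e ∈ X.edges, ¬ POdd A e)
    (hXm₁ : ∀ z ∈ X.support, z ∈ R₁.support → z = x₁)
    (hXm₂ : ∀ z ∈ X.support, z ∈ R₂.support → z = x₂)
    (hXeven : x₁ ∈ A ↔ x₂ ∈ A) :
    HasSkewedTheta G := by
  classical
  set T₁ := R₁.takeUntil x₁ hx₁ with hT₁def
  set D₁ := R₁.dropUntil x₁ hx₁ with hD₁def
  set T₂ := R₂.takeUntil x₂ hx₂ with hT₂def
  set D₂ := R₂.dropUntil x₂ hx₂ with hD₂def
  have sT₁ : T₁.support ⊆ R₁.support := Walk.support_takeUntil_subset _ _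
  have sT₂ : T₂.support ⊆ R₂.support := Walk.support_takeUntil_subset _ _
  have sD₁ : D₁.support ⊆ R₁.support := Walk.support_dropUntil_subset _ _
  have sD₂ : D₂.support ⊆ R₂.support := Walk.support_dropUntil_subset _ _
  have eT₁ : T₁.edges ⊆ R₁.edges := Walk.edges_takeUntil_subset _ _
  have eT₂ : T₂.edges ⊆ R₂.edges := Walk.edges_takeUntil_subset _ _
  have eD₁ : D₁.edges ⊆ R₁.edges := Walk.edges_dropUntil_subset _ _
  have eD₂ : D₂.edges ⊆ R₂.edges := Walk.edges_dropUntil_subset _ _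
  have cXR₁ : ∀ e ∈ X.edges, e ∉ R₁.edges := cross_edges hXm₁
  have cXR₂ : ∀ e ∈ X.edges, e ∉ R₂.edges := cross_edges hXm₂
  have cRR : ∀ e ∈ R₁.edges, e ∉ R₂.edges := edges_disj_of_support_disj hRdisj
  have hrR₁ : s(r₁, r₂) ∉ R₁.edges :=
    fun h => hRdisj (R₁.snd_mem_support_of_mem_edges h) R₂.start_mem_support
  have hrR₂ : s(r₁, r₂) ∉ R₂.edges :=
    fun h => hRdisj R₁.start_mem_support (R₂.fst_mem_support_of_mem_edges h)
  have hsR₁ : s(s₁, s₂) ∉ R₁.edges :=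
    fun h => hRdisj (R₁.snd_mem_support_of_mem_edges h) R₂.end_mem_support
  have hsR₂ : s(s₁, s₂) ∉ R₂.edges :=
    fun h => hRdisj R₁.end_mem_support (R₂.fst_mem_support_of_mem_edges h)
  have hrX : s(r₁, r₂) ∉ X.edges := fun h => not_podd_side (hXe _ h) hroA
  have hsX : s(s₁, s₂) ∉ X.edges := fun h => not_podd_side (hXe _ h) hsoA
  have tdR₁ : ∀ e ∈ T₁.edges, e ∉ D₁.edges := edgeDisj_take_drop hR₁.isTrail hx₁
  have tdR₂ : ∀ e ∈ T₂.edges, e ∉ D₂.edges := edgeDisj_take_drop hR₂.isTrail hx₂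
  set w₁ : G.Walk x₁ x₂ := T₁.reverse.append (Walk.cons hr T₂) with hw₁def
  set w₂ : G.Walk x₁ x₂ := D₁.append (Walk.cons hs D₂.reverse) with hw₂def
  have hw₁edges : ∀ e, e ∈ w₁.edges ↔ e ∈ T₁.edges ∨ e = s(r₁, r₂) ∨ e ∈ T₂.edges := by
    intro e
    simp [hw₁def, Walk.edges_append, Walk.edges_reverse, Walk.edges_cons, List.mem_reverse,
      or_assoc]
  have hw₂edges : ∀ e, e ∈ w₂.edges ↔ e ∈ D₁.edges ∨ e = s(s₁, s₂) ∨ e ∈ D₂.edges := by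
    intro e
    simp [hw₂def, Walk.edges_append, Walk.edges_reverse, Walk.edges_cons, List.mem_reverse,
      or_assoc]
  have pw₁ : w₁.IsPath := by
    refine isPath_append_aux (hR₁.takeUntil hx₁).reverse ?_ ?_
    · rw [Walk.cons_isPath_iff]
      exact ⟨hR₂.takeUntil hx₂, fun h => hRdisj R₁.start_mem_support (sT₂ h)⟩
    · intro z hz1 hz2
      have hz1' : z ∈ R₁.support := sT₁ (by simpa [Walk.support_reverse] using hz1)
      rw [Walk.support_cons] at hz2
      rcases List.mem_cons.mp hz2 with rfl | hz2
      · rfl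
      · exact absurd (hRdisj hz1' (sT₂ hz2)) id
  have pw₂ : w₂.IsPath := by
    refine isPath_append_aux (hR₁.dropUntil hx₁) ?_ ?_
    · rw [Walk.cons_isPath_iff]
      exact ⟨(hR₂.dropUntil hx₂).reverse, fun h =>
        hRdisj R₁.end_mem_support (sD₂ (by simpa [Walk.support_reverse] using h))⟩
    · intro z hz1 hz2
      have hz1' : z ∈ R₁.support := sD₁ hz1
      rw [Walk.support_cons] at hz2
      rcases List.mem_cons.mp hz2 with rfl | hz2
      · rfl
      · exact absurd (hRdisj hz1' (sD₂ (by simpa [Walk.support_reverse] using hz2))) id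
  have lw₁ : Odd w₁.length := by
    have hT₁len := parity_walk T₁ (fun e he => hRe₁ e (eT₁ he))
    have hT₂len := parity_walk T₂ (fun e he => hRe₂ e (eT₂ he))
    have hlen : w₁.length = T₁.length + (T₂.length + 1) := by
      simp [hw₁def, Walk.length_append, Walk.length_reverse, Walk.length_cons]
    rw [← Nat.not_even_iff_odd, hlen, Nat.even_add, Nat.even_add_one, ← hT₁len, ← hT₂len]
    exact iff_parity_helper₃ hroA hXeven
  have lw₂ : Odd w₂.length := by
    have hD₁len := parity_walk D₁ (fun e he => hRe₁ e (eD₁ he))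
    have hD₂len := parity_walk D₂ (fun e he => hRe₂ e (eD₂ he))
    have hlen : w₂.length = D₁.length + (D₂.length + 1) := by
      simp [hw₂def, Walk.length_append, Walk.length_reverse, Walk.length_cons]
    rw [← Nat.not_even_iff_odd, hlen, Nat.even_add, Nat.even_add_one, ← hD₁len, ← hD₂len]
    exact iff_parity_helper₃ hXeven hsoA
  have lw₃ : Even X.length := (parity_walk X hXe).mp hXeven
  refine ⟨x₁, x₂, w₁, w₂, X, pw₁, pw₂, hX, ?_, ?_, ?_, lw₁, lw₂, lw₃⟩
  · intro e he1 he2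
    rcases (hw₁edges e).mp he1 with h | h0 | h <;>
      rcases (hw₂edges e).mp he2 with h' | h0' | h'
    · exact tdR₁ e h h'
    · exact hsR₁ (h0' ▸ eT₁ h)
    · exact cRR e (eT₁ h) (eD₂ h')
    · exact hrR₁ (h0 ▸ eD₁ h')
    · exact hne (h0.symm.trans h0')
    · exact hrR₂ (h0 ▸ eD₂ h')
    · exact cRR e (eD₁ h') (eT₂ h)
    · exact hsR₂ (h0' ▸ eT₂ h)
    · exact tdR₂ e h h'
  · intro e he1 he2
    rcases (hw₁edges e).mp he1 with h | rfl | h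
    · exact cXR₁ e he2 (eT₁ h)
    · exact hrX he2
    · exact cXR₂ e he2 (eT₂ h)
  · intro e he1 he2
    rcases (hw₂edges e).mp he1 with h | rfl | h
    · exact cXR₁ e he2 (eD₁ h)
    · exact hsX he2
    · exact cXR₂ e he2 (eD₂ h)

lemma cross_of_odd_sum {a b : ℕ} {P Q R S : Prop} (ha : (P ↔ R) ↔ Even a)
    (hb : (Q ↔ S) ↔ Even b) (hPQ : P ↔ Q) (hodd : (a + b) % 2 = 1) : ¬ (R ↔ S) := by
  have h1 : ¬ Even (a + b) := by rw [Nat.even_iff]; omega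
  rw [Nat.even_add, ← ha, ← hb] at h1
  tauto

lemma odd_sum_of_cross {a b : ℕ} {P Q R S : Prop} (ha : (P ↔ R) ↔ Even a)
    (hb : (Q ↔ S) ↔ Even b) (hPQ : P ↔ Q) (h : ¬ (R ↔ S)) : (a + b) % 2 = 1 := by
  have h1 : ¬ Even (a + b) := by rw [Nat.even_add, ← ha, ← hb]; tauto
  rw [Nat.even_iff] at h1
  omega

lemma resolve (hr : G.Adj r₁ r₂) (hs : G.Adj s₁ s₂)
    (hroA : r₁ ∈ A ↔ r₂ ∈ A) (hsoA : s₁ ∈ A ↔ s₂ ∈ A)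
    (hR₁ : R₁.IsPath) (hR₂ : R₂.IsPath) (hRdisj : R₁.support.Disjoint R₂.support)
    (hRe₁ : ∀ e ∈ R₁.edges, ¬ POdd A e) (hRe₂ : ∀ e ∈ R₂.edges, ¬ POdd A e)
    {x₁ x₂ y₁ y₂ : V} {X : G.Walk x₁ x₂} {Y : G.Walk y₁ y₂}
    (hX : X.IsPath) (hY : Y.IsPath)
    (hx₁ : x₁ ∈ R₁.support) (hx₂ : x₂ ∈ R₂.support)
    (hy₁ : y₁ ∈ R₁.support) (hy₂ : y₂ ∈ R₂.support)
    (hXe : ∀ e ∈ X.edges, ¬ POdd A e) (hYe : ∀ e ∈ Y.edges, ¬ POdd A e)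
    (hXm₁ : ∀ z ∈ X.support, z ∈ R₁.support → z = x₁)
    (hXm₂ : ∀ z ∈ X.support, z ∈ R₂.support → z = x₂)
    (hYm₁ : ∀ z ∈ Y.support, z ∈ R₁.support → z = y₁)
    (hYm₂ : ∀ z ∈ Y.support, z ∈ R₂.support → z = y₂)
    (hXY : ∀ e ∈ X.edges, e ∉ Y.edges)
    (hXodd : ¬ (x₁ ∈ A ↔ x₂ ∈ A))
    (hcond : ((R₁.takeUntil x₁ hx₁).length ≤ (R₁.takeUntil y₁ hy₁).length ∧
        (R₂.takeUntil x₂ hx₂).length ≤ (R₂.takeUntil y₂ hy₂).length) ∨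
      ((R₁.takeUntil x₁ hx₁).length ≤ (R₁.takeUntil y₁ hy₁).length ∧
        (R₂.takeUntil y₂ hy₂).length ≤ (R₂.takeUntil x₂ hx₂).length ∧
        (((R₁.takeUntil x₁ hx₁).length + (R₂.takeUntil y₂ hy₂).length) % 2 = 1 ∨
         ((R₁.takeUntil y₁ hy₁).length + (R₂.takeUntil x₂ hx₂).length) % 2 = 1))) :
    HasSkewedTheta G := by
  classical
  have hpx₁ : (r₁ ∈ A ↔ x₁ ∈ A) ↔ Even (R₁.takeUntil x₁ hx₁).length :=
    parity_walk _ (fun e he => hRe₁ e (Walk.edges_takeUntil_subset _ _ he))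
  have hpy₁ : (r₁ ∈ A ↔ y₁ ∈ A) ↔ Even (R₁.takeUntil y₁ hy₁).length :=
    parity_walk _ (fun e he => hRe₁ e (Walk.edges_takeUntil_subset _ _ he))
  have hpx₂ : (r₂ ∈ A ↔ x₂ ∈ A) ↔ Even (R₂.takeUntil x₂ hx₂).length :=
    parity_walk _ (fun e he => hRe₂ e (Walk.edges_takeUntil_subset _ _ he))
  have hpy₂ : (r₂ ∈ A ↔ y₂ ∈ A) ↔ Even (R₂.takeUntil y₂ hy₂).length :=
    parity_walk _ (fun e he => hRe₂ e (Walk.edges_takeUntil_subset _ _ he))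
  rcases hcond with ⟨h1, h2⟩ | ⟨h1, h2, h3 | h3⟩
  · exact pairA hr hroA hR₁ hR₂ hRdisj hRe₁ hRe₂ hX hY hx₁ hx₂ hy₁ hy₂ hXe hYe
      hXm₁ hXm₂ hYm₁ hYm₂ hXY hXodd
      (mem_dropUntil_of_le R₁ hx₁ hy₁ h1) (mem_dropUntil_of_le R₂ hx₂ hy₂ h2)
  · exact pairB hr hroA hR₁ hR₂ hRdisj hRe₁ hRe₂ hX hY hx₁ hx₂ hy₁ hy₂ hXe hYe
      hXm₁ hXm₂ hYm₁ hYm₂ hXY (cross_of_odd_sum hpx₁ hpy₂ hroA h3)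
      (mem_dropUntil_of_le R₁ hx₁ hy₁ h1) (mem_dropUntil_of_le R₂ hy₂ hx₂ h2)
  · exact pairC hs hsoA hR₁ hR₂ hRdisj hRe₁ hRe₂ hX hY hx₁ hx₂ hy₁ hy₂ hXe hYe
      hXm₁ hXm₂ hYm₁ hYm₂ hXY (cross_of_odd_sum hpy₁ hpx₂ hroA h3)
      (mem_dropUntil_of_le R₁ hx₁ hy₁ h1) (mem_dropUntil_of_le R₂ hy₂ hx₂ h2)

lemma mk_meets (hRdisj : R₁.support.Disjoint R₂.support) {c d : V} {W : G.Walk c d}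
    (hc : c ∈ R₁.support) (hd : d ∈ R₂.support)
    (hint : ∀ x ∈ W.support, x ≠ c → x ≠ d → x ∉ R₁.support ∧ x ∉ R₂.support) :
    (∀ z ∈ W.support, z ∈ R₁.support → z = c) ∧
      (∀ z ∈ W.support, z ∈ R₂.support → z = d) := by
  constructor <;> intro z hz hzR
  · by_contra hne
    rcases eq_or_ne z d with rfl | hne2
    · exact hRdisj hzR hd
    · exact (hint z hz hne hne2).1 hzR
  · by_contra hne
    rcases eq_or_ne z c with rfl | hne2
    · exact hRdisj hc hzR
    · exact (hint z hz hne2 hne).2 hzR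

lemma first_edge {u v : V} (W : G.Walk u v) (h : 0 < W.length) :
    ∃ z, s(u, z) ∈ W.edges := by
  cases W with
  | nil => simp at h
  | @cons _ z _ adj p => exact ⟨z, by simp⟩

set_option maxHeartbeats 4000000 in
lemma sel_arith (a1 b1 a2 b2 a3 b3 : ℕ) (o1 : (a1 + b1) % 2 = 1)
    (o2 : (a2 + b2) % 2 = 1) (o3 : (a3 + b3) % 2 = 1) :
    ((a1 ≤ a2 ∧ b1 ≤ b2) ∨
      (a1 ≤ a2 ∧ b2 ≤ b1 ∧ ((a1 + b2) % 2 = 1 ∨ (a2 + b1) % 2 = 1))) ∨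
    ((a2 ≤ a1 ∧ b2 ≤ b1) ∨
      (a2 ≤ a1 ∧ b1 ≤ b2 ∧ ((a2 + b1) % 2 = 1 ∨ (a1 + b2) % 2 = 1))) ∨
    ((a1 ≤ a3 ∧ b1 ≤ b3) ∨
      (a1 ≤ a3 ∧ b3 ≤ b1 ∧ ((a1 + b3) % 2 = 1 ∨ (a3 + b1) % 2 = 1))) ∨
    ((a3 ≤ a1 ∧ b3 ≤ b1) ∨
      (a3 ≤ a1 ∧ b1 ≤ b3 ∧ ((a3 + b1) % 2 = 1 ∨ (a1 + b3) % 2 = 1))) ∨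
    ((a2 ≤ a3 ∧ b2 ≤ b3) ∨
      (a2 ≤ a3 ∧ b3 ≤ b2 ∧ ((a2 + b3) % 2 = 1 ∨ (a3 + b2) % 2 = 1))) ∨
    ((a3 ≤ a2 ∧ b3 ≤ b2) ∨
      (a3 ≤ a2 ∧ b2 ≤ b3 ∧ ((a3 + b2) % 2 = 1 ∨ (a2 + b3) % 2 = 1))) := by
  omega

set_option maxHeartbeats 1000000 in
lemma degenerate {V : Type u} [Fintype V] {G : SimpleGraph V} {A : Set V} (h3 : Subcubic G)
    {r₁ r₂ : V} (hr : G.Adj r₁ r₂) (hroA : r₁ ∈ A ↔ r₂ ∈ A)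
    {P Q T : G.Walk r₁ r₂}
    (hPl : 0 < P.length) (hQl : 0 < Q.length) (hTl : 0 < T.length)
    (hPe : ∀ e ∈ P.edges, ¬ POdd A e) (hQe : ∀ e ∈ Q.edges, ¬ POdd A e)
    (hTe : ∀ e ∈ T.edges, ¬ POdd A e)
    (hPQ : ∀ e ∈ P.edges, e ∉ Q.edges) (hPT : ∀ e ∈ P.edges, e ∉ T.edges)
    (hQT : ∀ e ∈ Q.edges, e ∉ T.edges) : False := by
  obtain ⟨zP, hzP⟩ := first_edge P hPl
  obtain ⟨zQ, hzQ⟩ := first_edge Q hQl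
  obtain ⟨zT, hzT⟩ := first_edge T hTl
  have hPr : zP ≠ r₂ := fun h => not_podd_side (hPe _ hzP) (by rw [h]; exact hroA)
  have hQr : zQ ≠ r₂ := fun h => not_podd_side (hQe _ hzQ) (by rw [h]; exact hroA)
  have hTr : zT ≠ r₂ := fun h => not_podd_side (hTe _ hzT) (by rw [h]; exact hroA)
  have hPQ' : zP ≠ zQ := fun h => hPQ _ hzP (by rw [h]; exact hzQ)
  have hPT' : zP ≠ zT := fun h => hPT _ hzP (by rw [h]; exact hzT)
  have hQT' : zQ ≠ zT := fun h => hQT _ hzQ (by rw [h]; exact hzT)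
  have hsub : ({r₂, zP, zQ, zT} : Set V) ⊆ G.neighborSet r₁ := by
    intro z hz
    simp only [Set.mem_insert_iff, Set.mem_singleton_iff] at hz
    rcases hz with rfl | rfl | rfl | rfl
    · exact hr
    · exact P.adj_of_mem_edges hzP
    · exact Q.adj_of_mem_edges hzQ
    · exact T.adj_of_mem_edges hzT
  have e2 : ({zQ, zT} : Set V).ncard = 2 := by
    rw [Set.ncard_insert_of_notMem (by simp [hQT']), Set.ncard_singleton]
  have e3 : ({zP, zQ, zT} : Set V).ncard = 3 := by
    rw [Set.ncard_insert_of_notMem (by simp [hPQ', hPT']), e2]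
  have e4 : ({r₂, zP, zQ, zT} : Set V).ncard = 4 := by
    rw [Set.ncard_insert_of_notMem
      (by simp [Ne.symm hPr, Ne.symm hQr, Ne.symm hTr]), e3]
  have hle := Set.ncard_le_ncard hsub (Set.toFinite _)
  rw [e4] at hle
  have := h3 r₁
  omega

set_option maxHeartbeats 1000000 in
lemma allOdd (hr : G.Adj r₁ r₂) (hs : G.Adj s₁ s₂)
    (hroA : r₁ ∈ A ↔ r₂ ∈ A) (hsoA : s₁ ∈ A ↔ s₂ ∈ A)
    (hR₁ : R₁.IsPath) (hR₂ : R₂.IsPath) (hRdisj : R₁.support.Disjoint R₂.support)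
    (hRe₁ : ∀ e ∈ R₁.edges, ¬ POdd A e) (hRe₂ : ∀ e ∈ R₂.edges, ¬ POdd A e)
    {p₁ p₂ q₁ q₂ t₁ t₂ : V}
    {P : G.Walk p₁ p₂} {Q : G.Walk q₁ q₂} {T : G.Walk t₁ t₂}
    (hPp : P.IsPath) (hQp : Q.IsPath) (hTp : T.IsPath)
    (hp₁ : p₁ ∈ R₁.support) (hq₁ : q₁ ∈ R₁.support) (ht₁ : t₁ ∈ R₁.support)
    (hp₂ : p₂ ∈ R₂.support) (hq₂ : q₂ ∈ R₂.support) (ht₂ : t₂ ∈ R₂.support)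
    (hPe : ∀ e ∈ P.edges, ¬ POdd A e) (hQe : ∀ e ∈ Q.edges, ¬ POdd A e)
    (hTe : ∀ e ∈ T.edges, ¬ POdd A e)
    (hPm₁ : ∀ z ∈ P.support, z ∈ R₁.support → z = p₁)
    (hPm₂ : ∀ z ∈ P.support, z ∈ R₂.support → z = p₂)
    (hQm₁ : ∀ z ∈ Q.support, z ∈ R₁.support → z = q₁)
    (hQm₂ : ∀ z ∈ Q.support, z ∈ R₂.support → z = q₂)
    (hTm₁ : ∀ z ∈ T.support, z ∈ R₁.support → z = t₁)
    (hTm₂ : ∀ z ∈ T.support, z ∈ R₂.support → z = t₂)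
    (hPQ : ∀ e ∈ P.edges, e ∉ Q.edges) (hPT : ∀ e ∈ P.edges, e ∉ T.edges)
    (hQT : ∀ e ∈ Q.edges, e ∉ T.edges)
    (hPodd : ¬ (p₁ ∈ A ↔ p₂ ∈ A)) (hQodd : ¬ (q₁ ∈ A ↔ q₂ ∈ A))
    (hTodd : ¬ (t₁ ∈ A ↔ t₂ ∈ A)) :
    HasSkewedTheta G := by
  classical
  have hQP : ∀ e ∈ Q.edges, e ∉ P.edges := fun e h h' => hPQ e h' h
  have hTP : ∀ e ∈ T.edges, e ∉ P.edges := fun e h h' => hPT e h' h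
  have hTQ : ∀ e ∈ T.edges, e ∉ Q.edges := fun e h h' => hQT e h' h
  have hpa1 : (r₁ ∈ A ↔ p₁ ∈ A) ↔ Even (R₁.takeUntil p₁ hp₁).length :=
    parity_walk _ (fun e he => hRe₁ e (Walk.edges_takeUntil_subset _ _ he))
  have hpb1 : (r₂ ∈ A ↔ p₂ ∈ A) ↔ Even (R₂.takeUntil p₂ hp₂).length :=
    parity_walk _ (fun e he => hRe₂ e (Walk.edges_takeUntil_subset _ _ he))
  have hpa2 : (r₁ ∈ A ↔ q₁ ∈ A) ↔ Even (R₁.takeUntil q₁ hq₁).length :=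
    parity_walk _ (fun e he => hRe₁ e (Walk.edges_takeUntil_subset _ _ he))
  have hpb2 : (r₂ ∈ A ↔ q₂ ∈ A) ↔ Even (R₂.takeUntil q₂ hq₂).length :=
    parity_walk _ (fun e he => hRe₂ e (Walk.edges_takeUntil_subset _ _ he))
  have hpa3 : (r₁ ∈ A ↔ t₁ ∈ A) ↔ Even (R₁.takeUntil t₁ ht₁).length :=
    parity_walk _ (fun e he => hRe₁ e (Walk.edges_takeUntil_subset _ _ he))
  have hpb3 : (r₂ ∈ A ↔ t₂ ∈ A) ↔ Even (R₂.takeUntil t₂ ht₂).length :=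
    parity_walk _ (fun e he => hRe₂ e (Walk.edges_takeUntil_subset _ _ he))
  have o1 := odd_sum_of_cross hpa1 hpb1 hroA hPodd
  have o2 := odd_sum_of_cross hpa2 hpb2 hroA hQodd
  have o3 := odd_sum_of_cross hpa3 hpb3 hroA hTodd
  rcases sel_arith _ _ _ _ _ _ o1 o2 o3 with h | h | h | h | h | h
  · exact resolve hr hs hroA hsoA hR₁ hR₂ hRdisj hRe₁ hRe₂ hPp hQp hp₁ hp₂
      hq₁ hq₂ hPe hQe hPm₁ hPm₂ hQm₁ hQm₂ hPQ hPodd h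
  · exact resolve hr hs hroA hsoA hR₁ hR₂ hRdisj hRe₁ hRe₂ hQp hPp hq₁ hq₂
      hp₁ hp₂ hQe hPe hQm₁ hQm₂ hPm₁ hPm₂ hQP hQodd h
  · exact resolve hr hs hroA hsoA hR₁ hR₂ hRdisj hRe₁ hRe₂ hPp hTp hp₁ hp₂
      ht₁ ht₂ hPe hTe hPm₁ hPm₂ hTm₁ hTm₂ hPT hPodd h
  · exact resolve hr hs hroA hsoA hR₁ hR₂ hRdisj hRe₁ hRe₂ hTp hPp ht₁ ht₂
      hp₁ hp₂ hTe hPe hTm₁ hTm₂ hPm₁ hPm₂ hTP hTodd h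
  · exact resolve hr hs hroA hsoA hR₁ hR₂ hRdisj hRe₁ hRe₂ hQp hTp hq₁ hq₂
      ht₁ ht₂ hQe hTe hQm₁ hQm₂ hTm₁ hTm₂ hQT hQodd h
  · exact resolve hr hs hroA hsoA hR₁ hR₂ hRdisj hRe₁ hRe₂ hTp hQp ht₁ ht₂
      hq₁ hq₂ hTe hQe hTm₁ hTm₂ hQm₁ hQm₂ hTQ hTodd h

end pairs

/-- in a subcubic graph with bipartition `(A,B)`, two P-odd edges
`r₁r₂`, `s₁s₂` and disjoint P-even paths `R₁ = r₁…s₁`, `R₂ = r₂…s₂`: if `G` has no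
skewed theta then there are no three pairwise edge-disjoint `R₁`–`R₂`-paths consisting
of P-even edges. -/
theorem stmt_6 {V : Type u} [Fintype V] (G : SimpleGraph V) (h3 : Subcubic G)
    (A B : Set V) (hd : Disjoint A B) (hu : A ∪ B = Set.univ)
    (r₁ r₂ s₁ s₂ : V) (hr : G.Adj r₁ r₂) (hs : G.Adj s₁ s₂)
    (hro : POdd A s(r₁, r₂)) (hso : POdd A s(s₁, s₂))
    (R₁ : G.Walk r₁ s₁) (R₂ : G.Walk r₂ s₂) (hR₁ : R₁.IsPath) (hR₂ : R₂.IsPath)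
    (hRdisj : R₁.support.Disjoint R₂.support)
    (hRe₁ : ∀ e ∈ R₁.edges, ¬ POdd A e) (hRe₂ : ∀ e ∈ R₂.edges, ¬ POdd A e)
    (hnst : ¬ HasSkewedTheta G) :
    ¬ ∃ (p₁ p₂ q₁ q₂ t₁ t₂ : V)
        (P : G.Walk p₁ p₂) (Q : G.Walk q₁ q₂) (T : G.Walk t₁ t₂),
      P.IsPath ∧ Q.IsPath ∧ T.IsPath ∧
      0 < P.length ∧ 0 < Q.length ∧ 0 < T.length ∧
      p₁ ∈ R₁.support ∧ q₁ ∈ R₁.support ∧ t₁ ∈ R₁.support ∧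
      p₂ ∈ R₂.support ∧ q₂ ∈ R₂.support ∧ t₂ ∈ R₂.support ∧
      (∀ x ∈ P.support, x ≠ p₁ → x ≠ p₂ → x ∉ R₁.support ∧ x ∉ R₂.support) ∧
      (∀ x ∈ Q.support, x ≠ q₁ → x ≠ q₂ → x ∉ R₁.support ∧ x ∉ R₂.support) ∧
      (∀ x ∈ T.support, x ≠ t₁ → x ≠ t₂ → x ∉ R₁.support ∧ x ∉ R₂.support) ∧
      (∀ e ∈ P.edges, ¬ POdd A e) ∧ (∀ e ∈ Q.edges, ¬ POdd A e) ∧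
      (∀ e ∈ T.edges, ¬ POdd A e) ∧
      WalkEdgeDisjoint P Q ∧ WalkEdgeDisjoint P T ∧ WalkEdgeDisjoint Q T := by
  classical
  rintro ⟨p₁, p₂, q₁, q₂, t₁, t₂, P, Q, T, hPp, hQp, hTp, hPl, hQl, hTl,
    hp₁, hq₁, ht₁, hp₂, hq₂, ht₂, hPint, hQint, hTint, hPe, hQe, hTe, hPQ, hPT, hQT⟩
  have hroA : r₁ ∈ A ↔ r₂ ∈ A := podd_side hro
  have hsoA : s₁ ∈ A ↔ s₂ ∈ A := podd_side hso
  by_cases hD : r₁ = s₁ ∧ r₂ = s₂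
  · obtain ⟨hD1, hD2⟩ := hD
    subst hD1
    subst hD2
    have hR₁nil : R₁ = Walk.nil := Walk.isPath_iff_eq_nil.mp hR₁
    have hR₂nil : R₂ = Walk.nil := Walk.isPath_iff_eq_nil.mp hR₂
    subst hR₁nil
    subst hR₂nil
    simp only [Walk.support_nil, List.mem_singleton] at hp₁ hq₁ ht₁ hp₂ hq₂ ht₂
    subst hp₁; subst hq₁; subst ht₁; subst hp₂; subst hq₂; subst ht₂
    exact degenerate h3 hr hroA hPl hQl hTl hPe hQe hTe hPQ hPT hQT
  · have hne : s(r₁, r₂) ≠ s(s₁, s₂) := by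
      intro h
      rw [Sym2.eq_iff] at h
      rcases h with ⟨h1, h2⟩ | ⟨h1, h2⟩
      · exact hD ⟨h1, h2⟩
      · exact hRdisj R₁.start_mem_support (by rw [h1]; exact R₂.end_mem_support)
    obtain ⟨hPm₁, hPm₂⟩ := mk_meets hRdisj hp₁ hp₂ hPint
    obtain ⟨hQm₁, hQm₂⟩ := mk_meets hRdisj hq₁ hq₂ hQint
    obtain ⟨hTm₁, hTm₂⟩ := mk_meets hRdisj ht₁ ht₂ hTint
    by_cases hPodd : (p₁ ∈ A ↔ p₂ ∈ A)
    · exact hnst (oneEven hr hs hroA hsoA hne hR₁ hR₂ hRdisj hRe₁ hRe₂ hPp hp₁ hp₂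
        hPe hPm₁ hPm₂ hPodd)
    by_cases hQodd : (q₁ ∈ A ↔ q₂ ∈ A)
    · exact hnst (oneEven hr hs hroA hsoA hne hR₁ hR₂ hRdisj hRe₁ hRe₂ hQp hq₁ hq₂
        hQe hQm₁ hQm₂ hQodd)
    by_cases hTodd : (t₁ ∈ A ↔ t₂ ∈ A)
    · exact hnst (oneEven hr hs hroA hsoA hne hR₁ hR₂ hRdisj hRe₁ hRe₂ hTp ht₁ ht₂
        hTe hTm₁ hTm₂ hTodd)
    exact hnst (allOdd hr hs hroA hsoA hR₁ hR₂ hRdisj hRe₁ hRe₂ hPp hQp hTp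
      hp₁ hq₁ ht₁ hp₂ hq₂ ht₂ hPe hQe hTe hPm₁ hPm₂ hQm₁ hQm₂ hTm₁ hTm₂
      hPQ hPT hQT hPodd hQodd hTodd)
end

section
/- Every t-minor of a claw-free graph is claw-free. -/
open SimpleGraph

attribute [local instance] Classical.propDecidable

universe u

variable {V : Type u}

lemma clawFree_iso {W W' : Type u} {H : SimpleGraph W'} {G : SimpleGraph W}
    (e : H ≃g G) (h : ClawFree G) : ClawFree H := by
  rintro u ⟨a, b, c, h1, h2, h3, h4, h5, h6, h7, h8, h9⟩
  exact h (e u) ⟨e a, e b, e c, e.map_adj_iff.mpr h1, e.map_adj_iff.mpr h2,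
    e.map_adj_iff.mpr h3, fun h => h4 (e.injective h), fun h => h5 (e.injective h),
    fun h => h6 (e.injective h), fun h => h7 (e.map_adj_iff.mp h),
    fun h => h8 (e.map_adj_iff.mp h), fun h => h9 (e.map_adj_iff.mp h)⟩

lemma clawFree_induce {W : Type u} {G : SimpleGraph W} (S : Set W) (h : ClawFree G) :
    ClawFree (G.induce S) := by
  rintro u ⟨a, b, c, h1, h2, h3, h4, h5, h6, h7, h8, h9⟩
  exact h u ⟨a, b, c, h1, h2, h3,
    fun hh => h4 (Subtype.ext hh), fun hh => h5 (Subtype.ext hh),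
    fun hh => h6 (Subtype.ext hh), fun hh => h7 hh, fun hh => h8 hh, fun hh => h9 hh⟩

lemma tC_adj {W : Type u} {G : SimpleGraph W} {v : W} {x y : {w : W // w ∉ G.neighborSet v}} :
    (tContract G v).Adj x y ↔ x ≠ y ∧ (G.Adj x y ∨ ((x : W) = v ∧ ∃ n, G.Adj v n ∧ G.Adj n y)
      ∨ ((y : W) = v ∧ ∃ n, G.Adj v n ∧ G.Adj n x)) := by
  show (SimpleGraph.fromRel _).Adj x y ↔ _
  rw [SimpleGraph.fromRel_adj]
  constructor
  · rintro ⟨h1, (h2 | h2) | (h2 | h2)⟩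
    exacts [⟨h1, .inl h2⟩, ⟨h1, .inr (.inl h2)⟩, ⟨h1, .inl h2.symm⟩, ⟨h1, .inr (.inr h2)⟩]
  · rintro ⟨h1, h2 | h2 | h2⟩
    exacts [⟨h1, .inl (.inl h2)⟩, ⟨h1, .inl (.inr h2)⟩, ⟨h1, .inr (.inr h2)⟩]

/-- Helper: a claw in the contraction centred at `u ≠ v` with one leaf equal to `v`
yields a claw in `G`. -/
lemma mem_ns {W : Type u} {G : SimpleGraph W} {v n : W} (h : G.Adj v n) :
    n ∈ G.neighborSet v := h

lemma tC_helper {W : Type u} {G : SimpleGraph W} {v : W}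
    {u a b c : {w : W // w ∉ G.neighborSet v}}
    (hcf : ClawFree G) (huv : (u : W) ≠ v) (hav : (a : W) = v)
    (hua : (tContract G v).Adj u a) (hub : (tContract G v).Adj u b)
    (huc : (tContract G v).Adj u c)
    (hab : a ≠ b) (hac : a ≠ c) (hbc : b ≠ c)
    (nab : ¬ (tContract G v).Adj a b) (nac : ¬ (tContract G v).Adj a c)
    (nbc : ¬ (tContract G v).Adj b c) : False := by
  have hbv : (b : W) ≠ v := fun h => hab (Subtype.ext (hav.trans h.symm))
  have hcv : (c : W) ≠ v := fun h => hac (Subtype.ext (hav.trans h.symm))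
  -- extract the neighbour n witnessing adjacency u–a (=v)
  obtain ⟨-, h2⟩ := tC_adj.mp hua
  have hvnotu : ¬ G.Adj v (u : W) := u.2
  have hn : ∃ n, G.Adj v n ∧ G.Adj n (u : W) := by
    rcases h2 with h | ⟨h, -⟩ | ⟨-, h⟩
    · rw [hav] at h; exact absurd h.symm hvnotu
    · exact absurd h huv
    · exact h
  obtain ⟨n, hvn, hnu⟩ := hn
  -- G-adjacencies u–b, u–c
  have hGub : G.Adj (u : W) (b : W) := by
    obtain ⟨-, h | ⟨h, -⟩ | ⟨h, -⟩⟩ := tC_adj.mp hub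
    exacts [h, absurd h huv, absurd h hbv]
  have hGuc : G.Adj (u : W) (c : W) := by
    obtain ⟨-, h | ⟨h, -⟩ | ⟨h, -⟩⟩ := tC_adj.mp huc
    exacts [h, absurd h huv, absurd h hcv]
  have hnb : n ≠ (b : W) := fun h => b.2 (mem_ns (h ▸ hvn))
  have hnc : n ≠ (c : W) := fun h => c.2 (mem_ns (h ▸ hvn))
  have hGnb : ¬ G.Adj n (b : W) := fun h =>
    nab (tC_adj.mpr ⟨hab, Or.inr (Or.inl ⟨hav, n, hvn, h⟩)⟩)
  have hGnc : ¬ G.Adj n (c : W) := fun h =>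
    nac (tC_adj.mpr ⟨hac, Or.inr (Or.inl ⟨hav, n, hvn, h⟩)⟩)
  have hGbc : ¬ G.Adj (b : W) (c : W) := fun h => nbc (tC_adj.mpr ⟨hbc, Or.inl h⟩)
  exact hcf (u : W) ⟨n, b, c, hnu.symm, hGub, hGuc, hnb, hnc,
    fun h => hbc (Subtype.ext h), hGnb, hGnc, hGbc⟩

lemma clawFree_tContract {W : Type u} {G : SimpleGraph W} (v : W)
    (hst : StableSet G (G.neighborSet v)) (hcf : ClawFree G) :
    ClawFree (tContract G v) := by
  rintro u ⟨a, b, c, hua, hub, huc, hab, hac, hbc, nab, nac, nbc⟩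
  by_cases huv : (u : W) = v
  · -- centre is v: each leaf has a contracted neighbour witness
    have hav : (a : W) ≠ v := fun h => (tC_adj.mp hua).1 (Subtype.ext (huv.trans h.symm))
    have hbv : (b : W) ≠ v := fun h => (tC_adj.mp hub).1 (Subtype.ext (huv.trans h.symm))
    have hcv : (c : W) ≠ v := fun h => (tC_adj.mp huc).1 (Subtype.ext (huv.trans h.symm))
    have wit : ∀ x : {w : W // w ∉ G.neighborSet v}, (tContract G v).Adj u x →
        (x : W) ≠ v → ∃ n, G.Adj v n ∧ G.Adj n (x : W) := by
      intro x hux hxv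
      obtain ⟨-, h | ⟨-, h⟩ | ⟨h, -⟩⟩ := tC_adj.mp hux
      · rw [huv] at h; exact absurd (mem_ns h) x.2
      · exact h
      · exact absurd h hxv
    obtain ⟨na, hvna, hnaa⟩ := wit a hua hav
    obtain ⟨nb, hvnb, hnbb⟩ := wit b hub hbv
    obtain ⟨nc, hvnc, hncc⟩ := wit c huc hcv
    have hGab : ¬ G.Adj (a : W) (b : W) := fun h => nab (tC_adj.mpr ⟨hab, Or.inl h⟩)
    have hGac : ¬ G.Adj (a : W) (c : W) := fun h => nac (tC_adj.mpr ⟨hac, Or.inl h⟩)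
    have hGbc : ¬ G.Adj (b : W) (c : W) := fun h => nbc (tC_adj.mpr ⟨hbc, Or.inl h⟩)
    by_cases e1 : na = nb
    · exact hcf na ⟨v, a, b, hvna.symm, hnaa, e1 ▸ hnbb, fun h => hav h.symm,
        fun h => hbv h.symm, fun h => hab (Subtype.ext h),
        fun h => a.2 (mem_ns h), fun h => b.2 (mem_ns h), hGab⟩
    by_cases e2 : na = nc
    · exact hcf na ⟨v, a, c, hvna.symm, hnaa, e2 ▸ hncc, fun h => hav h.symm,
        fun h => hcv h.symm, fun h => hac (Subtype.ext h),
        fun h => a.2 (mem_ns h), fun h => c.2 (mem_ns h), hGac⟩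
    by_cases e3 : nb = nc
    · exact hcf nb ⟨v, b, c, hvnb.symm, hnbb, e3 ▸ hncc, fun h => hbv h.symm,
        fun h => hcv h.symm, fun h => hbc (Subtype.ext h),
        fun h => b.2 (mem_ns h), fun h => c.2 (mem_ns h), hGbc⟩
    · exact hcf v ⟨na, nb, nc, hvna, hvnb, hvnc, e1, e2, e3,
        hst hvna hvnb e1, hst hvna hvnc e2, hst hvnb hvnc e3⟩
  · by_cases hav : (a : W) = v
    · exact absurd (tC_helper hcf huv hav hua hub huc hab hac hbc nab nac nbc) not_false
    by_cases hbv : (b : W) = v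
    · exact absurd (tC_helper hcf huv hbv hub hua huc hab.symm hbc hac
        (fun h => nab h.symm) nbc nac) not_false
    by_cases hcv : (c : W) = v
    · exact absurd (tC_helper hcf huv hcv huc hua hub hac.symm hbc.symm hab
        (fun h => nac h.symm) (fun h => nbc h.symm) nab) not_false
    -- no leaf is v: direct claw in G
    have adjG : ∀ x : {w : W // w ∉ G.neighborSet v}, (tContract G v).Adj u x →
        (x : W) ≠ v → G.Adj (u : W) (x : W) := by
      intro x hux hxv
      obtain ⟨-, h | ⟨h, -⟩ | ⟨h, -⟩⟩ := tC_adj.mp hux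
      exacts [h, absurd h huv, absurd h hxv]
    exact hcf (u : W) ⟨a, b, c, adjG a hua hav, adjG b hub hbv, adjG c huc hcv,
      fun h => hab (Subtype.ext h), fun h => hac (Subtype.ext h),
      fun h => hbc (Subtype.ext h),
      fun h => nab (tC_adj.mpr ⟨hab, Or.inl h⟩),
      fun h => nac (tC_adj.mpr ⟨hac, Or.inl h⟩),
      fun h => nbc (tC_adj.mpr ⟨hbc, Or.inl h⟩)⟩

lemma clawFree_tStep {W W' : Type u} {G : SimpleGraph W} {H : SimpleGraph W'}
    (h : TStep G H) (hcf : ClawFree G) : ClawFree H := by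
  rcases h with ⟨v, ⟨e⟩⟩ | ⟨v, hst, ⟨e⟩⟩
  · exact clawFree_iso e (clawFree_induce _ hcf)
  · exact clawFree_iso e (clawFree_tContract v hst hcf)

/-- every t-minor of a claw-free graph is claw-free. -/
theorem stmt_8 {W W' : Type u} (G : SimpleGraph W) (H : SimpleGraph W')
    (hcf : ClawFree G) (hm : IsTMinor G H) : ClawFree H := by
  have key : ∀ (x : Σ U : Type u, SimpleGraph U),
      Relation.ReflTransGen (fun a b : (Σ U : Type u, SimpleGraph U) => TStep a.2 b.2)
        ⟨W, G⟩ x → ClawFree x.2 := by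
    intro x hx
    induction hx with
    | refl => exact hcf
    | tail _ hstep ih => exact clawFree_tStep hstep ih
  exact key ⟨W', H⟩ hm
end

section
/- A t-perfect claw-free graph has maximum degree at most 4. More precisely: if a claw-free graph contains a vertex of degree at least 5, then it contains K_4 or the 5-wheel W_5 as an induced subgraph, and hence is not t-perfect. -/
open SimpleGraph

attribute [local instance] Classical.propDecidable

universe u

variable {V : Type u}

namespace Stmt9Aux

def pidx (i j : ℕ) : ℕ :=
  if i < j then 5*i + j - (i*(i+1))/2 - i - 1 else 5*j + i - (j*(j+1))/2 - j - 1
def adjN (n i j : ℕ) : Bool := (i != j) && Nat.testBit n (pidx i j)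
def cyc (i j : ℕ) : Bool := decide (j = (i+1) % 5) || decide (i = (j+1) % 5)
def c5codes : List ℕ := [220, 234, 316, 358, 425, 453, 570, 598, 665, 707, 789, 803]
def P1 : Fin 10 → Fin 5 := ![0,0,0,0,1,1,1,2,2,3]
def P2 : Fin 10 → Fin 5 := ![1,2,3,4,2,3,4,3,4,4]
def key (i j : Fin 5) : Fin 10 := ⟨pidx i j % 10, Nat.mod_lt _ (by norm_num)⟩

def nOf (b : Fin 10 → Bool) : ℕ :=
  (b 0).toNat <<< 0 ||| (b 1).toNat <<< 1 ||| (b 2).toNat <<< 2 ||| (b 3).toNat <<< 3 |||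
  (b 4).toNat <<< 4 ||| (b 5).toNat <<< 5 ||| (b 6).toNat <<< 6 ||| (b 7).toNat <<< 7 |||
  (b 8).toNat <<< 8 ||| (b 9).toNat <<< 9

lemma testBit_toNat_shift (c : Bool) (i k : ℕ) :
    Nat.testBit (c.toNat <<< i) k = (decide (k = i) && c) := by
  cases c
  · simp [Bool.toNat]
  · simp only [Bool.toNat, Nat.shiftLeft_eq, Nat.one_mul, Bool.and_true]
    by_cases h : k = i
    · subst h; simp [Nat.testBit_two_pow_self]
    · simp [h, Nat.testBit_two_pow_of_ne (Ne.symm h)]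

lemma testBit_nOf (b : Fin 10 → Bool) (k : Fin 10) : Nat.testBit (nOf b) (k : ℕ) = b k := by
  fin_cases k <;> simp only [nOf, Nat.testBit_or, testBit_toNat_shift] <;> simp

lemma nOf_lt (b : Fin 10 → Bool) : nOf b < 1024 := by
  have h : ∀ (c : Bool) (i : ℕ), i ≤ 9 → c.toNat <<< i < 1024 := by
    intro c i hi
    have : c.toNat ≤ 1 := Bool.toNat_le c
    have h2 : c.toNat <<< i ≤ 512 := by
      rw [Nat.shiftLeft_eq]
      calc c.toNat * 2^i ≤ 1 * 2^9 :=
        Nat.mul_le_mul this (Nat.pow_le_pow_right (by norm_num) hi)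
      _ = 512 := by norm_num
    omega
  have h1024 : (1024 : ℕ) = 2^10 := by norm_num
  rw [nOf, h1024]
  repeat
    apply Nat.or_lt_two_pow
  all_goals rw [← h1024]; apply h _ _ (by norm_num)


set_option maxRecDepth 100000 in
set_option maxHeartbeats 4000000 in
theorem classifyA : ∀ n : Fin 1024,
    (∀ i : Fin 5, ∀ j : Fin 5, ∀ k : Fin 5, i < j → j < k →
      (adjN n i j || adjN n i k || adjN n j k) = true) →
    (∃ i j k : Fin 5, i < j ∧ j < k ∧
      adjN n i j = true ∧ adjN n i k = true ∧ adjN n j k = true) ∨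
    (n : ℕ) ∈ c5codes := by decide

set_option maxRecDepth 10000 in
theorem classifyB : ∀ n ∈ c5codes, ∃ f : Fin 5 → Fin 5,
    (∀ i j : Fin 5, i ≠ j → f i ≠ f j) ∧
    ∀ i j : Fin 5, adjN n (f i) (f j) = cyc i j := by
  intro n hn
  fin_cases hn
  · exact ⟨![0,3,2,1,4], by decide, by decide⟩
  · exact ⟨![0,2,3,1,4], by decide, by decide⟩
  · exact ⟨![0,3,1,2,4], by decide, by decide⟩
  · exact ⟨![0,2,4,1,3], by decide, by decide⟩
  · exact ⟨![0,1,3,2,4], by decide, by decide⟩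
  · exact ⟨![0,1,4,2,3], by decide, by decide⟩
  · exact ⟨![0,2,1,3,4], by decide, by decide⟩
  · exact ⟨![0,2,1,4,3], by decide, by decide⟩
  · exact ⟨![0,1,2,3,4], by decide, by decide⟩
  · exact ⟨![0,1,4,3,2], by decide, by decide⟩
  · exact ⟨![0,1,2,4,3], by decide, by decide⟩
  · exact ⟨![0,1,3,4,2], by decide, by decide⟩

theorem fact_pidx : ∀ i j : Fin 5, i ≠ j → pidx (i : ℕ) (j : ℕ) = (key i j : ℕ) := by decide

theorem fact_tbl : ∀ i j : Fin 5, i ≠ j →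
    (P1 (key i j) = i ∧ P2 (key i j) = j) ∨ (P1 (key i j) = j ∧ P2 (key i j) = i) := by decide

theorem cyc_self : ∀ i : Fin 5, cyc (i : ℕ) (i : ℕ) = false := by decide

end Stmt9Aux

namespace Stmt9Aux
open SimpleGraph
variable {V : Type u} {G : SimpleGraph V}

/-- build an embedding from adjacency-preserving maps -/
def embOfMaps {W : Type} (H : SimpleGraph W) (G : SimpleGraph V) (h : W → V)
    (hinj : Function.Injective h)
    (h1 : ∀ a b, H.Adj a b → G.Adj (h a) (h b))
    (h2 : ∀ a b, a ≠ b → ¬H.Adj a b → ¬G.Adj (h a) (h b)) : H ↪g G :=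
  ⟨⟨h, hinj⟩, by
    intro a b
    constructor
    · intro hg
      by_contra hH
      have hab : a ≠ b := fun e => G.irrefl (e ▸ hg)
      exact h2 a b hab hH hg
    · exact h1 a b⟩

instance : DecidableRel K4.Adj := fun a b =>
  decidable_of_iff (a ≠ b) (Iff.symm (SimpleGraph.top_adj a b))

instance : DecidableRel W5.Adj := fun a b =>
  decidable_of_iff _
    (Iff.symm (SimpleGraph.fromRel_adj
      (fun i j : Fin 6 => (j:ℕ) = 5 ∨ ((i:ℕ) < 5 ∧ (j:ℕ) < 5 ∧ (j:ℕ) = ((i:ℕ)+1) % 5)) a b))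

theorem w5cyc : ∀ a b : Fin 6, (ha : (a:ℕ) < 5) → (hb : (b:ℕ) < 5) →
    (W5.Adj a b ↔ cyc (a:ℕ) (b:ℕ) = true) := by decide

theorem w5hub : ∀ a b : Fin 6, (a:ℕ) = 5 → (b:ℕ) < 5 → W5.Adj a b := by decide

theorem w5stable : ∀ T : Finset (Fin 6),
    (∀ i ∈ T, ∀ j ∈ T, ¬W5.Adj i j) → ∑ i ∈ T, (![1,1,1,1,1,2] : Fin 6 → ℕ) i ≤ 2 := by decide

theorem k4stable : ∀ T : Finset (Fin 4),
    (∀ i ∈ T, ∀ j ∈ T, ¬K4.Adj i j) → ∑ i ∈ T, (fun _ => 1 : Fin 4 → ℕ) i ≤ 1 := by decide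

end Stmt9Aux
namespace Stmt9Aux

lemma third_mem_TSTAB [Fintype V] (G : SimpleGraph V) :
    (fun _ => (1:ℝ)/3) ∈ TSTAB G := by
  refine ⟨fun v => ⟨by norm_num, by norm_num⟩, fun u v _ => by norm_num, ?_⟩
  intro v c hc hodd
  have hlen : 3 ≤ c.length := hc.three_le_length
  have hnil : ¬ c.Nil := by
    intro h
    rw [SimpleGraph.Walk.nil_iff_length_eq] at h
    omega
  have hv : v ∈ c.support.tail := by
    rw [← SimpleGraph.Walk.support_tail_of_not_nil c hnil]
    exact SimpleGraph.Walk.end_mem_support _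
  have hcard : c.support.toFinset.card ≤ c.length := by
    have h1 : c.support = v :: c.support.tail := by
      conv_lhs => rw [c.support_eq_cons]
    rw [h1, List.toFinset_cons, Finset.insert_eq_self.mpr (List.mem_toFinset.mpr hv)]
    calc c.support.tail.toFinset.card ≤ c.support.tail.length := c.support.tail.toFinset_card_le
      _ = c.support.length - 1 := by rw [List.length_tail]
      _ = c.length := by rw [SimpleGraph.Walk.length_support]; omega
  obtain ⟨m, hm⟩ := hodd
  have hm1 : 1 ≤ m := by omega
  have hdiv : c.length / 2 = m := by omega
  rw [Finset.sum_const, nsmul_eq_mul, hdiv]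
  have h3m : (c.support.toFinset.card : ℝ) ≤ 3 * m := by
    have : c.support.toFinset.card ≤ 3 * m := by omega
    exact_mod_cast this
  linarith

lemma not_tperfect_of_emb {m : ℕ} [Fintype V] {G : SimpleGraph V} (H : SimpleGraph (Fin m))
    (e : H ↪g G) (c : Fin m → ℕ) (B : ℕ)
    (hstab : ∀ T : Finset (Fin m), (∀ i ∈ T, ∀ j ∈ T, ¬H.Adj i j) → ∑ i ∈ T, c i ≤ B)
    (hbig : 3 * B < ∑ i, c i) : ¬ TPerfect G := by
  intro htp
  set x : V → ℝ := fun _ => (1:ℝ)/3 with hxdef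
  have hx : x ∈ TSTAB G := third_mem_TSTAB G
  have hx' : x ∈ stableSetPolytope G := by rw [TPerfect] at htp; rw [htp]; exact hx
  set L : (V → ℝ) → ℝ := fun y => ∑ i, (c i : ℝ) * y (e i) with hLdef
  have hlin : IsLinearMap ℝ L := by
    constructor
    · intro y z
      simp only [hLdef, Pi.add_apply, mul_add, Finset.sum_add_distrib]
    · intro t y
      simp only [hLdef, Pi.smul_apply, smul_eq_mul, Finset.mul_sum]
      congr 1; ext i; ring
  have hsub : stableSetPolytope G ⊆ {y | L y ≤ (B : ℝ)} := by
    apply convexHull_min ?_ (convex_halfSpace_le hlin B)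
    rintro y ⟨s, hs, rfl⟩
    show L (s.indicator 1) ≤ (B : ℝ)
    have hval : L (s.indicator 1) =
        ∑ i ∈ Finset.univ.filter (fun i => e i ∈ s), (c i : ℝ) := by
      rw [Finset.sum_filter]
      apply Finset.sum_congr rfl
      intro i _
      by_cases hi : e i ∈ s <;> simp [Set.indicator_apply, hi]
    have hT : ∀ i ∈ Finset.univ.filter (fun i => e i ∈ s),
        ∀ j ∈ Finset.univ.filter (fun i => e i ∈ s), ¬H.Adj i j := by
      intro i hi j hj hadj
      simp only [Finset.mem_filter] at hi hj
      have hij : i ≠ j := H.ne_of_adj hadj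
      exact hs hi.2 hj.2 (fun h => hij (e.injective h)) (e.map_rel_iff.mpr hadj)
    have := hstab _ hT
    rw [hval, ← Nat.cast_sum]
    exact_mod_cast this
  have h1 : L x ≤ (B : ℝ) := hsub hx'
  have h2 : L x = (∑ i, (c i : ℝ)) / 3 := by
    simp only [hLdef, hxdef]
    rw [Finset.sum_div]
    apply Finset.sum_congr rfl
    intro i _
    ring
  rw [h2, ← Nat.cast_sum] at h1
  have : ((∑ i, c i : ℕ) : ℝ) ≤ 3 * B := by linarith
  have : (∑ i, c i) ≤ 3 * B := by exact_mod_cast this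
  omega

end Stmt9Aux
namespace Stmt9Aux
variable {V : Type u} {G : SimpleGraph V}

/-- Boolean encoding of the adjacency among `g 0, …, g 4`. -/
noncomputable def bOf (G : SimpleGraph V) (g : Fin 5 → V) : Fin 10 → Bool :=
  fun k => decide (G.Adj (g (P1 k)) (g (P2 k)))

lemma adj_iff (g : Fin 5 → V) {i j : Fin 5} (hij : i ≠ j) :
    adjN (nOf (bOf G g)) (i : ℕ) (j : ℕ) = true ↔ G.Adj (g i) (g j) := by
  have hne : ((i : ℕ) != (j : ℕ)) = true := by
    simp [Fin.val_ne_iff, hij]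
  rw [adjN, hne, Bool.true_and, fact_pidx i j hij, testBit_nOf, bOf]
  rcases fact_tbl i j hij with ⟨h1, h2⟩ | ⟨h1, h2⟩
  · rw [h1, h2, decide_eq_true_eq]
  · rw [h1, h2, decide_eq_true_eq, G.adj_comm]

lemma k4_of (v a b c : V) (hva : G.Adj v a) (hvb : G.Adj v b) (hvc : G.Adj v c)
    (hab : G.Adj a b) (hac : G.Adj a c) (hbc : G.Adj b c) : Nonempty (K4 ↪g G) := by
  have hne : ∀ {x y : V}, G.Adj x y → x ≠ y := fun h => G.ne_of_adj h
  refine ⟨embOfMaps K4 G ![v, a, b, c] ?_ ?_ ?_⟩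
  · intro x y hxy
    fin_cases x <;> fin_cases y <;>
      first
        | rfl
        | (exfalso
           simp only [Matrix.cons_val_zero, Matrix.cons_val_one, Matrix.head_cons,
             Matrix.cons_val_two, Matrix.tail_cons, Matrix.cons_val_three] at hxy
           first
             | exact hne hva hxy | exact hne hvb hxy | exact hne hvc hxy
             | exact hne hab hxy | exact hne hac hxy | exact hne hbc hxy
             | exact hne hva hxy.symm | exact hne hvb hxy.symm | exact hne hvc hxy.symm
             | exact hne hab hxy.symm | exact hne hac hxy.symm | exact hne hbc hxy.symm)
  · intro x y hxy
    have hxy' : x ≠ y := K4.ne_of_adj hxy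
    fin_cases x <;> fin_cases y <;>
      simp only [Matrix.cons_val_zero, Matrix.cons_val_one, Matrix.head_cons,
        Matrix.cons_val_two, Matrix.tail_cons, Matrix.cons_val_three] <;>
      first
        | exact absurd rfl hxy'
        | exact hva | exact hvb | exact hvc | exact hab | exact hac | exact hbc
        | exact hva.symm | exact hvb.symm | exact hvc.symm
        | exact hab.symm | exact hac.symm | exact hbc.symm
  · intro x y hxy hnadj
    exfalso
    exact hnadj ((SimpleGraph.top_adj x y).mpr hxy)

end Stmt9Aux
namespace Stmt9Aux
variable {V : Type u} {G : SimpleGraph V}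

lemma w5_of (v : V) (g : Fin 5 → V) (hginj : Function.Injective g)
    (hv : ∀ i, G.Adj v (g i))
    (hcyc : ∀ i j : Fin 5, G.Adj (g i) (g j) ↔ cyc (i : ℕ) (j : ℕ) = true) :
    Nonempty (W5 ↪g G) := by
  set h : Fin 6 → V := fun a => if ha : (a : ℕ) < 5 then g ⟨a, ha⟩ else v with hdef
  have hlt : ∀ (a : Fin 6) (ha : (a : ℕ) < 5), h a = g ⟨a, ha⟩ := by
    intro a ha; simp [hdef, ha]
  have hge : ∀ (a : Fin 6), ¬ (a : ℕ) < 5 → h a = v := by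
    intro a ha; simp [hdef, ha]
  have hvne : ∀ i : Fin 5, v ≠ g i := fun i => G.ne_of_adj (hv i)
  refine ⟨embOfMaps W5 G h ?_ ?_ ?_⟩
  · intro a b hab
    by_cases ha : (a : ℕ) < 5 <;> by_cases hb : (b : ℕ) < 5
    · rw [hlt a ha, hlt b hb] at hab
      have h2 : (⟨(a:ℕ), ha⟩ : Fin 5) = ⟨(b:ℕ), hb⟩ := hginj hab
      have h3 : (a : ℕ) = (b : ℕ) := by simpa using h2
      exact Fin.ext h3
    · rw [hlt a ha, hge b hb] at hab
      exact absurd hab.symm (hvne _)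
    · rw [hge a ha, hlt b hb] at hab
      exact absurd hab (hvne _)
    · apply Fin.ext; omega
  · intro a b hab
    have hne : a ≠ b := W5.ne_of_adj hab
    by_cases ha : (a : ℕ) < 5 <;> by_cases hb : (b : ℕ) < 5
    · rw [hlt a ha, hlt b hb]
      exact (hcyc _ _).mpr ((w5cyc a b ha hb).mp hab)
    · rw [hlt a ha, hge b hb]
      exact (hv _).symm
    · rw [hge a ha, hlt b hb]
      exact hv _
    · exact absurd (Fin.ext (by omega : (a:ℕ) = (b:ℕ))) hne
  · intro a b hne hnadj
    by_cases ha : (a : ℕ) < 5 <;> by_cases hb : (b : ℕ) < 5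
    · rw [hlt a ha, hlt b hb]
      intro hadj
      exact hnadj ((w5cyc a b ha hb).mpr ((hcyc _ _).mp hadj))
    · exact absurd ((w5hub b a (by omega) ha).symm) hnadj
    · exact absurd (w5hub a b (by omega) hb) hnadj
    · exact absurd (Fin.ext (by omega : (a:ℕ) = (b:ℕ))) hne

end Stmt9Aux

/-- a claw-free graph with a vertex of degree at least 5 contains `K₄` or
the 5-wheel `W₅` as an induced subgraph, and hence is not t-perfect. -/
theorem stmt_9 {V : Type u} [Fintype V] (G : SimpleGraph V) (hcf : ClawFree G)
    (v : V) (h5 : 5 ≤ (G.neighborSet v).ncard) :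
    (Nonempty (K4 ↪g G) ∨ Nonempty (W5 ↪g G)) ∧ ¬ TPerfect G := by
  classical
  obtain ⟨t, hts, ht5⟩ := Set.exists_subset_card_eq h5
  have htfin : t.Finite := Set.toFinite t
  haveI : Fintype t := htfin.fintype
  have hcard : Fintype.card t = 5 := by
    rw [← Set.toFinset_card, ← Set.ncard_eq_toFinset_card', ht5]
  let e : t ≃ Fin 5 := Fintype.equivFinOfCardEq hcard
  let g : Fin 5 → V := fun i => ((e.symm i : t) : V)
  have hginj : Function.Injective g := by
    intro i j hij
    exact e.symm.injective (Subtype.ext hij)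
  have hgadj : ∀ i, G.Adj v (g i) := fun i => hts (e.symm i).2
  set b : Fin 10 → Bool := Stmt9Aux.bOf G g with hb
  set n : ℕ := Stmt9Aux.nOf b with hn
  have hn10 : n < 1024 := Stmt9Aux.nOf_lt b
  have hbit : ∀ i j : Fin 5, i ≠ j → (Stmt9Aux.adjN n (i:ℕ) (j:ℕ) = true ↔ G.Adj (g i) (g j)) :=
    fun i j hij => Stmt9Aux.adj_iff g hij
  have hclaw : ∀ i j k : Fin 5, i ≠ j → i ≠ k → j ≠ k →
      G.Adj (g i) (g j) ∨ G.Adj (g i) (g k) ∨ G.Adj (g j) (g k) := by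
    intro i j k hij hik hjk
    by_contra hcon
    push_neg at hcon
    exact hcf v ⟨g i, g j, g k, hgadj i, hgadj j, hgadj k,
      hginj.ne hij, hginj.ne hik, hginj.ne hjk, hcon.1, hcon.2.1, hcon.2.2⟩
  have hyp : ∀ i : Fin 5, ∀ j : Fin 5, ∀ k : Fin 5, i < j → j < k →
      (Stmt9Aux.adjN n i j || Stmt9Aux.adjN n i k || Stmt9Aux.adjN n j k) = true := by
    intro i j k hij hjk
    rcases hclaw i j k (ne_of_lt hij) (ne_of_lt (hij.trans hjk)) (ne_of_lt hjk) with h | h | h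
    · rw [(hbit i j (ne_of_lt hij)).mpr h]; simp
    · rw [(hbit i k (ne_of_lt (hij.trans hjk))).mpr h]; simp
    · rw [(hbit j k (ne_of_lt hjk)).mpr h]; simp
  rcases Stmt9Aux.classifyA ⟨n, hn10⟩ hyp with ⟨i, j, k, hij, hjk, a1, a2, a3⟩ | hmem
  · have e1 := (hbit i j (ne_of_lt hij)).mp a1
    have e2 := (hbit i k (ne_of_lt (hij.trans hjk))).mp a2
    have e3 := (hbit j k (ne_of_lt hjk)).mp a3
    obtain ⟨emb⟩ := Stmt9Aux.k4_of v (g i) (g j) (g k) (hgadj i) (hgadj j) (hgadj k) e1 e2 e3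
    refine ⟨Or.inl ⟨emb⟩, Stmt9Aux.not_tperfect_of_emb K4 emb (fun _ => 1) 1 Stmt9Aux.k4stable ?_⟩
    norm_num [Fin.sum_univ_succ]
  · obtain ⟨f, hfinj, hf⟩ := Stmt9Aux.classifyB n hmem
    have hfinj' : Function.Injective f := by
      intro a c hac
      by_contra hne
      exact hfinj a c hne hac
    have hcyc : ∀ i j : Fin 5, G.Adj ((g ∘ f) i) ((g ∘ f) j) ↔ Stmt9Aux.cyc (i:ℕ) (j:ℕ) = true := by
      intro i j
      by_cases hij : i = j
      · subst hij
        rw [Stmt9Aux.cyc_self i]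
        simp only [Bool.false_eq_true, iff_false]
        exact G.irrefl
      · rw [← hf i j]
        exact (hbit (f i) (f j) (hfinj i j hij)).symm
    obtain ⟨emb⟩ := Stmt9Aux.w5_of v (g ∘ f) (hginj.comp hfinj') (fun i => hgadj (f i)) hcyc
    refine ⟨Or.inr ⟨emb⟩, Stmt9Aux.not_tperfect_of_emb W5 emb ![1,1,1,1,1,2] 2 Stmt9Aux.w5stable ?_⟩
    norm_num [Fin.sum_univ_succ]
end

section
/- If a claw-free graph G contains a vertex v of degree at least 5 and G is K_4-free, then the neighbourhood of v contains an induced 5-cycle; hence G contains the 5-wheel W_5 as an induced subgraph. -/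
open SimpleGraph

attribute [local instance] Classical.propDecidable

universe u

variable {V : Type u}

namespace Stmt10Aux

def pidx (i j : Fin 5) : Fin 10 :=
  ⟨((i:ℕ)*5 - (i:ℕ)*((i:ℕ)+1)/2 + ((j:ℕ) - (i:ℕ) - 1)) % 10, Nat.mod_lt _ (by norm_num)⟩

def comb (b1 b2 : Fin 5 → Bool) (k : Fin 10) : Bool :=
  if h : (k:ℕ) < 5 then b1 ⟨k, h⟩ else b2 ⟨(k:ℕ) - 5, by omega⟩

def adjB (b : Fin 10 → Bool) (i j : Fin 5) : Bool :=
  if i = j then false else b (pidx (min i j) (max i j))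

def c5b (i j : Fin 5) : Bool := decide ((j:ℕ) = ((i:ℕ)+1)%5 ∨ (i:ℕ) = ((j:ℕ)+1)%5)

def pFst : Fin 10 → Fin 5 := ![0,0,0,0,1,1,1,2,2,3]
def pSnd : Fin 10 → Fin 5 := ![1,2,3,4,2,3,4,3,4,4]

lemma pair_spec : ∀ i j : Fin 5, i < j → pFst (pidx i j) = i ∧ pSnd (pidx i j) = j := by decide

set_option maxRecDepth 10000 in
set_option maxHeartbeats 4000000 in
set_option synthInstance.maxHeartbeats 1000000 in
set_option synthInstance.maxSize 2048 in
lemma key : ∀ b1 b2 : Fin 5 → Bool,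
    (∀ i j k : Fin 5, i≠j → i≠k → j≠k →
      ¬(adjB (comb b1 b2) i j = true ∧ adjB (comb b1 b2) i k = true ∧ adjB (comb b1 b2) j k = true)) →
    (∀ i j k : Fin 5, i≠j → i≠k → j≠k →
      (adjB (comb b1 b2) i j = true ∨ adjB (comb b1 b2) i k = true ∨ adjB (comb b1 b2) j k = true)) →
    ∃ σ : Equiv.Perm (Fin 5), ∀ i j, adjB (comb b1 b2) (σ i) (σ j) = c5b i j := by decide

lemma c5_adj (i j : Fin 5) : C5.Adj i j ↔ ((j:ℕ) = ((i:ℕ)+1)%5 ∨ (i:ℕ) = ((j:ℕ)+1)%5) := by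
  have hi := i.isLt; have hj := j.isLt
  simp only [C5, SimpleGraph.fromRel_adj, ne_eq, Fin.ext_iff]
  omega

lemma w5_adj (i j : Fin 6) : W5.Adj i j ↔ ((i:ℕ) ≠ (j:ℕ) ∧ ((j:ℕ) = 5 ∨ (i:ℕ) = 5 ∨
    ((i:ℕ) < 5 ∧ (j:ℕ) < 5 ∧ ((j:ℕ) = ((i:ℕ)+1)%5 ∨ (i:ℕ) = ((j:ℕ)+1)%5)))) := by
  have hi := i.isLt; have hj := j.isLt
  simp only [W5, SimpleGraph.fromRel_adj, ne_eq, Fin.ext_iff]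
  omega

lemma c5b_adj (i j : Fin 5) : C5.Adj i j ↔ c5b i j = true := by
  rw [c5_adj]; simp [c5b]

end Stmt10Aux

open Stmt10Aux in
/-- if a claw-free, `K₄`-free graph has a vertex `v` of degree at least 5,
then the neighbourhood of `v` contains an induced 5-cycle; hence `G` contains the
5-wheel `W₅` as an induced subgraph. -/
theorem stmt_10 {V : Type u} [Fintype V] (G : SimpleGraph V)
    (hcf : ClawFree G) (hk4 : G.CliqueFree 4)
    (v : V) (h5 : 5 ≤ (G.neighborSet v).ncard) :
    (∃ f : C5 ↪g G, ∀ i : Fin 5, f i ∈ G.neighborSet v) ∧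
    Nonempty (W5 ↪g G) := by
  classical
  have hfin : (G.neighborSet v).Finite := Set.toFinite _
  rw [Set.ncard_eq_toFinset_card _ hfin] at h5
  obtain ⟨t, hts, htc⟩ := Finset.exists_subset_card_eq h5
  have hlen : t.toList.length = 5 := by rw [Finset.length_toList, htc]
  set a : Fin 5 → V := fun i => t.toList.get (Fin.cast hlen.symm i) with ha
  have hamem : ∀ i, a i ∈ G.neighborSet v := by
    intro i
    have h1 : a i ∈ t.toList := List.get_mem _ _
    exact hfin.mem_toFinset.mp (hts (Finset.mem_toList.mp h1))
  have hadj : ∀ i, G.Adj v (a i) := fun i => hamem i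
  have hainj : Function.Injective a := by
    intro i j h
    have h2 := (List.nodup_iff_injective_get.mp t.nodup_toList) h
    simpa [Fin.ext_iff] using congrArg Fin.val h2
  set f : Fin 5 → Fin 5 → Bool := fun i j => decide (G.Adj (a i) (a j)) with hfdef
  have hfsym : ∀ i j, f i j = f j i := by
    intro i j; simp only [hfdef]
    exact decide_eq_decide.mpr ⟨fun h => h.symm, fun h => h.symm⟩
  set b1 : Fin 5 → Bool := fun k => f (pFst ⟨(k:ℕ), by omega⟩) (pSnd ⟨(k:ℕ), by omega⟩) with hb1
  set b2 : Fin 5 → Bool := fun k => f (pFst ⟨(k:ℕ)+5, by omega⟩) (pSnd ⟨(k:ℕ)+5, by omega⟩) with hb2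
  have hcomb : ∀ k : Fin 10, comb b1 b2 k = f (pFst k) (pSnd k) := by
    intro k; fin_cases k <;> rfl
  have hfB : ∀ i j : Fin 5, adjB (comb b1 b2) i j = f i j := by
    intro i j
    by_cases h : i = j
    · subst h
      simp only [adjB, if_pos rfl, hfdef]
      exact (decide_eq_false (G.irrefl)).symm
    · have hmm : min i j < max i j := min_lt_max.mpr h
      obtain ⟨h1, h2⟩ := pair_spec _ _ hmm
      have : adjB (comb b1 b2) i j = f (min i j) (max i j) := by
        rw [adjB, if_neg h, hcomb, h1, h2]
      rw [this]
      rcases le_total i j with hle | hle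
      · rw [min_eq_left hle, max_eq_right hle]
      · rw [min_eq_right hle, max_eq_left hle, hfsym]
  have hftrue : ∀ i j, f i j = true ↔ G.Adj (a i) (a j) := by
    intro i j; simp [hfdef]
  have htri : ∀ i j k : Fin 5, i≠j → i≠k → j≠k →
      ¬(adjB (comb b1 b2) i j = true ∧ adjB (comb b1 b2) i k = true ∧ adjB (comb b1 b2) j k = true) := by
    rintro i j k hij hik hjk ⟨h1, h2, h3⟩
    rw [hfB, hftrue] at h1 h2 h3
    have hvi := hadj i; have hvj := hadj j; have hvk := hadj k
    have nvi : v ≠ a i := G.ne_of_adj hvi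
    have nvj : v ≠ a j := G.ne_of_adj hvj
    have nvk : v ≠ a k := G.ne_of_adj hvk
    have nij : a i ≠ a j := fun h => hij (hainj h)
    have nik : a i ≠ a k := fun h => hik (hainj h)
    have njk : a j ≠ a k := fun h => hjk (hainj h)
    refine hk4 {v, a i, a j, a k} ⟨?_, ?_⟩
    · intro x hx y hy hxy
      simp only [Finset.coe_insert, Set.mem_insert_iff, Finset.coe_singleton,
        Set.mem_singleton_iff] at hx hy
      rcases hx with rfl|rfl|rfl|rfl <;> rcases hy with rfl|rfl|rfl|rfl <;>
        first
          | exact absurd rfl hxy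
          | assumption
          | exact hvi.symm | exact hvj.symm | exact hvk.symm
          | exact h1.symm | exact h2.symm | exact h3.symm
    · rw [Finset.card_insert_of_notMem (by simp [nvi, nvj, nvk]),
        Finset.card_insert_of_notMem (by simp [nij, nik]),
        Finset.card_insert_of_notMem (by simp [njk]),
        Finset.card_singleton]
  have hcot : ∀ i j k : Fin 5, i≠j → i≠k → j≠k →
      (adjB (comb b1 b2) i j = true ∨ adjB (comb b1 b2) i k = true ∨ adjB (comb b1 b2) j k = true) := by
    intro i j k hij hik hjk
    by_contra hc
    push_neg at hc
    obtain ⟨h1, h2, h3⟩ := hc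
    rw [hfB, Ne, hftrue] at h1 h2 h3
    exact hcf v ⟨a i, a j, a k, hadj i, hadj j, hadj k,
      fun h => hij (hainj h), fun h => hik (hainj h), fun h => hjk (hainj h), h1, h2, h3⟩
  obtain ⟨σ, hσ⟩ := key b1 b2 htri hcot
  have hmain : ∀ i j : Fin 5, G.Adj (a (σ i)) (a (σ j)) ↔ C5.Adj i j := by
    intro i j
    rw [c5b_adj, ← hσ, hfB, hftrue]
  have hinj2 : Function.Injective (fun i => a (σ i)) := hainj.comp σ.injective
  let emb : C5 ↪g G := ⟨⟨fun i => a (σ i), hinj2⟩, fun {i j} => hmain i j⟩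
  refine ⟨⟨emb, fun i => hamem (σ i)⟩, ?_⟩
  -- W5 embedding
  set g : Fin 6 → V := Fin.lastCases v (fun i => a (σ i)) with hg
  have hgc : ∀ i : Fin 5, g i.castSucc = a (σ i) := fun i => by
    simp [hg, Fin.lastCases_castSucc]
  have hgl : g (Fin.last 5) = v := by simp only [hg, Fin.lastCases_last]
  have hne : ∀ i : Fin 5, a (σ i) ≠ v := fun i => (G.ne_of_adj (hadj (σ i))).symm
  have hginj : Function.Injective g := by
    intro x y h
    induction x using Fin.lastCases with
    | last =>
      induction y using Fin.lastCases with
      | last => rfl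
      | cast j => rw [hgl, hgc] at h; exact absurd h.symm (hne j)
    | cast i =>
      induction y using Fin.lastCases with
      | last => rw [hgl, hgc] at h; exact absurd h (hne i)
      | cast j => rw [hgc, hgc] at h; exact congrArg Fin.castSucc (σ.injective (hainj h))
  have hgrel : ∀ x y : Fin 6, G.Adj (g x) (g y) ↔ W5.Adj x y := by
    intro x y
    induction x using Fin.lastCases with
    | last =>
      induction y using Fin.lastCases with
      | last => simp [hgl, w5_adj]
      | cast j =>
        rw [hgl, hgc, w5_adj]
        have hj := j.isLt
        simp only [Fin.val_last, Fin.coe_castSucc]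
        constructor
        · intro _; exact ⟨by omega, Or.inr (Or.inl trivial)⟩
        · intro _; exact hadj (σ j)
    | cast i =>
      induction y using Fin.lastCases with
      | last =>
        rw [hgl, hgc, w5_adj]
        have hi := i.isLt
        simp only [Fin.val_last, Fin.coe_castSucc]
        constructor
        · intro _; exact ⟨by omega, Or.inl trivial⟩
        · intro _; exact (hadj (σ i)).symm
      | cast j =>
        rw [hgc, hgc, hmain, c5_adj, w5_adj]
        have hi := i.isLt; have hj := j.isLt
        simp only [Fin.coe_castSucc]
        omega
  exact ⟨⟨⟨g, hginj⟩, fun {x y} => hgrel x y⟩⟩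
end
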